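/- arXiv:2409.11039 — 4 statements merged into one kernel-verified Lean document; each statement's English description precedes it below -/
import Mathlib

section
/- Let N ≥ 2 be an integer, R > 0, and m > (N−2)/2. Then there exists a constant C = C(N,m,R) such that for every u ∈ 𝒜, sup_{r ∈ (0,R]} r^m |u(r)| ≤ C (∫₀^R r^{N-1}|u'(r)|² dr)^{1/2}. -/
open MeasureTheory Set Filter
open scoped Classical

noncomputable section

/-- The space 𝒜 of functions `u ∈ W^{1,1}_loc((0,R])` (modelled here by functions that are
differentiable on `(0,R]` with derivative `d`) such that `∫₀^R r^{N-1} |u'|² dr < ∞`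
and `u(R) = 0`. -/
structure SpaceA (N : ℕ) (R : ℝ) where
  u : ℝ → ℝ
  d : ℝ → ℝ
  hasDeriv : ∀ r ∈ Set.Ioc (0 : ℝ) R, HasDerivAt u (d r) r
  sq_integrable : MeasureTheory.IntegrableOn (fun r : ℝ => r ^ (N - 1) * d r ^ 2) (Set.Ioo 0 R)
  boundary : u R = 0

namespace SpaceA

variable {N : ℕ} {R : ℝ}

/-- Membership in `K = {u ∈ 𝒜 : ‖u'‖_∞ ≤ 1}`. -/
def inK (w : SpaceA N R) : Prop := ∀ r ∈ Set.Ioo (0 : ℝ) R, |w.d r| ≤ 1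

/-- `‖u‖² = ∫₀^R r^{N-1}|u'|² dr`. -/
def normSq (w : SpaceA N R) : ℝ := ∫ r in Set.Ioo (0 : ℝ) R, r ^ (N - 1) * w.d r ^ 2

/-- The distance in `𝒜`. -/
def distA (w v : SpaceA N R) : ℝ :=
  Real.sqrt (∫ r in Set.Ioo (0 : ℝ) R, r ^ (N - 1) * (w.d r - v.d r) ^ 2)

/-- The (real-valued) functional `Ψ(u) = ∫₀^R r^{N-1}(1 - √(1-|u'|²)) dr` (used on `K`). -/
def PsiR (w : SpaceA N R) : ℝ :=
  ∫ r in Set.Ioo (0 : ℝ) R, r ^ (N - 1) * (1 - Real.sqrt (1 - w.d r ^ 2))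

/-- The extended-real-valued functional `Ψ`, equal to `+∞` off `K`. -/
def PsiE (w : SpaceA N R) : EReal := if w.inK then ((w.PsiR : ℝ) : EReal) else ⊤

def isPos (w : SpaceA N R) : Prop := ∀ r ∈ Set.Ioo (0 : ℝ) R, 0 < w.u r

def isNeg (w : SpaceA N R) : Prop := ∀ r ∈ Set.Ioo (0 : ℝ) R, w.u r < 0

end SpaceA

variable {N : ℕ} {R : ℝ}

/-- `F(r,s) = ∫₀ˢ f(r,t) dt`. -/
def Fint (f : ℝ → ℝ → ℝ) (r s : ℝ) : ℝ := ∫ t in (0 : ℝ)..s, f r t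

/-- (F1) continuity of `f`. -/
def hypF1 (R : ℝ) (f : ℝ → ℝ → ℝ) : Prop :=
  ContinuousOn (fun p : ℝ × ℝ => f p.1 p.2) (Set.Icc 0 R ×ˢ Set.Icc (-R) R)

/-- (F2) `f(r,s)/s → 0` as `s → 0`, uniformly in `r`. -/
def hypF2 (R : ℝ) (f : ℝ → ℝ → ℝ) : Prop :=
  ∀ ε > (0 : ℝ), ∃ δ > (0 : ℝ), ∀ r ∈ Set.Icc (0 : ℝ) R, ∀ s : ℝ, s ≠ 0 → |s| < δ →
    |f r s / s| < ε

/-- (F3) sign condition. -/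
def hypF3 (R : ℝ) (f : ℝ → ℝ → ℝ) : Prop :=
  ∀ r ∈ Set.Icc (0 : ℝ) R, ∀ s : ℝ, s ≠ 0 → |s| ≤ R → 0 < s * f r s

/-- (F4) superlinearity with the quantitative bound. -/
def hypF4 (N : ℕ) (R : ℝ) (f : ℝ → ℝ → ℝ) : Prop :=
  ∃ θ : ℝ, 2 < θ ∧ ∃ a₁ : ℝ, 0 < a₁ ∧ ∃ a₂ : ℝ, 0 ≤ a₂ ∧
    (∀ r ∈ Set.Icc (0 : ℝ) R, ∀ s ∈ Set.Icc (-R) R, a₁ * |s| ^ θ - a₂ ≤ Fint f r s) ∧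
    (1 + a₂) / (N : ℝ) -
        a₁ * R ^ θ *
          (Real.Gamma (N : ℝ) * Real.Gamma (θ + 1) / Real.Gamma ((N : ℝ) + θ + 1)) ≤ -1

/-- (F5) quasi-evenness of `F` near `0`. -/
def hypF5 (R : ℝ) (f : ℝ → ℝ → ℝ) : Prop :=
  ∃ σ : ℝ, 0 < σ ∧ ∃ θb : ℝ, 4 < θb ∧
    ∀ r ∈ Set.Icc (0 : ℝ) R, ∀ s ∈ Set.Icc (-σ) σ,
      |Fint f r (-s) - Fint f r s| ≤ |s| ^ θb

/-- (F6) `f ∈ C¹` together with a growth bound on `∂ₛf` near `s = 0`. -/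
def hypF6 (R : ℝ) (f : ℝ → ℝ → ℝ) : Prop :=
  ContDiffOn ℝ 1 (fun p : ℝ × ℝ => f p.1 p.2) (Set.Icc 0 R ×ˢ Set.Icc (-R) R) ∧
  ∃ σ : ℝ, 0 < σ ∧ ∃ θt : ℝ, 2 < θt ∧ ∃ c : ℝ, 0 < c ∧
    ∀ r ∈ Set.Icc (0 : ℝ) R, ∀ s ∈ Set.Icc (-σ) σ,
      |deriv (fun t => f r t) s| ≤ c * |s| ^ (θt - 2)

/-- (B) the weight `b` is continuous and pinched between positive constants. -/
def hypB (R : ℝ) (b : ℝ → ℝ) : Prop :=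
  ContinuousOn b (Set.Icc 0 R) ∧
    ∃ b₀ b₁ : ℝ, 0 < b₀ ∧ ∀ r ∈ Set.Icc (0 : ℝ) R, b₀ ≤ b r ∧ b r ≤ b₁

/-- A weak solution of problem (BP). -/
def isWeakSol (q lam : ℝ) (b : ℝ → ℝ) (f : ℝ → ℝ → ℝ) (w : SpaceA N R) : Prop :=
  w.inK ∧ ∀ φ : SpaceA N R, φ.inK →
    (∫ r in Set.Ioo (0 : ℝ) R, r ^ (N - 1) * w.d r * φ.d r / Real.sqrt (1 - w.d r ^ 2)) =
      ∫ r in Set.Ioo (0 : ℝ) R,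
        r ^ (N - 1) * (lam * b r * |w.u r| ^ (q - 2) * w.u r + f r (w.u r)) * φ.u r

/-- The truncation `f⁺`. -/
def fplus (R : ℝ) (f : ℝ → ℝ → ℝ) (r s : ℝ) : ℝ :=
  if s < 0 then 0
  else if s ≤ R then f r s
  else if s < R + 1 then -(f r R) * (s - R - 1)
  else 0

/-- The truncation `f⁻`. -/
def fminus (R : ℝ) (f : ℝ → ℝ → ℝ) (r s : ℝ) : ℝ :=
  if 0 < s then 0
  else if -R ≤ s then f r s
  else if -R - 1 < s then f r (-R) * (s + R + 1)
  else 0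

/-- The extension `f̂` (equal to `f` for `|s| ≤ R`, linear for `R < |s| < R+1`, `0` beyond). -/
def fhat (R : ℝ) (f : ℝ → ℝ → ℝ) (r s : ℝ) : ℝ :=
  if |s| ≤ R then f r s
  else if R < s ∧ s < R + 1 then f r R * (R + 1 - s)
  else if -(R + 1) < s ∧ s < -R then f r (-R) * (s + R + 1)
  else 0

/-- A weak solution of the modified problem (BP⁺). -/
def isWeakSolPlus (q lam : ℝ) (b : ℝ → ℝ) (f : ℝ → ℝ → ℝ) (w : SpaceA N R) : Prop :=
  w.inK ∧ ∀ φ : SpaceA N R, φ.inK →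
    (∫ r in Set.Ioo (0 : ℝ) R, r ^ (N - 1) * w.d r * φ.d r / Real.sqrt (1 - w.d r ^ 2)) =
      ∫ r in Set.Ioo (0 : ℝ) R,
        r ^ (N - 1) *
          (lam * b r * |w.u r| ^ (q - 2) * max (w.u r) 0 + fplus R f r (w.u r)) * φ.u r

/-- A weak solution of the modified problem (BP⁻). -/
def isWeakSolMinus (q lam : ℝ) (b : ℝ → ℝ) (f : ℝ → ℝ → ℝ) (w : SpaceA N R) : Prop :=
  w.inK ∧ ∀ φ : SpaceA N R, φ.inK →
    (∫ r in Set.Ioo (0 : ℝ) R, r ^ (N - 1) * w.d r * φ.d r / Real.sqrt (1 - w.d r ^ 2)) =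
      ∫ r in Set.Ioo (0 : ℝ) R,
        r ^ (N - 1) *
          (-(lam * b r * |w.u r| ^ (q - 2) * max (-w.u r) 0) + fminus R f r (w.u r)) * φ.u r

/-- The pairing `⟨(F_λ⁺)'(u), z⟩`. -/
def FDplus (q lam : ℝ) (b : ℝ → ℝ) (f : ℝ → ℝ → ℝ) (w : SpaceA N R) (z : ℝ → ℝ) : ℝ :=
  -lam * (∫ r in Set.Ioo (0 : ℝ) R,
      r ^ (N - 1) * b r * |max (w.u r) 0| ^ (q - 2) * max (w.u r) 0 * z r)
    - ∫ r in Set.Ioo (0 : ℝ) R, r ^ (N - 1) * fplus R f r (w.u r) * z r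

/-- The pairing `⟨(F_λ⁻)'(u), z⟩`. -/
def FDminus (q lam : ℝ) (b : ℝ → ℝ) (f : ℝ → ℝ → ℝ) (w : SpaceA N R) (z : ℝ → ℝ) : ℝ :=
  -lam * (∫ r in Set.Ioo (0 : ℝ) R,
      r ^ (N - 1) * b r * |max (-w.u r) 0| ^ (q - 2) * max (-w.u r) 0 * z r)
    - ∫ r in Set.Ioo (0 : ℝ) R, r ^ (N - 1) * fminus R f r (w.u r) * z r

/-- Critical point of `I_λ⁺ = Ψ + F_λ⁺` in the sense of Szulkin. -/
def isCritPlus (q lam : ℝ) (b : ℝ → ℝ) (f : ℝ → ℝ → ℝ) (w : SpaceA N R) : Prop :=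
  w.inK ∧ ∀ v : SpaceA N R, v.inK →
    0 ≤ FDplus q lam b f w (fun r => v.u r - w.u r) + v.PsiR - w.PsiR

/-- Critical point of `I_λ⁻ = Ψ + F_λ⁻` in the sense of Szulkin. -/
def isCritMinus (q lam : ℝ) (b : ℝ → ℝ) (f : ℝ → ℝ → ℝ) (w : SpaceA N R) : Prop :=
  w.inK ∧ ∀ v : SpaceA N R, v.inK →
    0 ≤ FDminus q lam b f w (fun r => v.u r - w.u r) + v.PsiR - w.PsiR

/-- The functional `I_λ⁺` (its real-valued expression, valid on `K`). -/
def IlamPlus (q lam : ℝ) (b : ℝ → ℝ) (f : ℝ → ℝ → ℝ) (w : SpaceA N R) : ℝ :=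
  w.PsiR - (lam / q) * (∫ r in Set.Ioo (0 : ℝ) R, r ^ (N - 1) * b r * |max (w.u r) 0| ^ q)
    - ∫ r in Set.Ioo (0 : ℝ) R, r ^ (N - 1) * Fint (fplus R f) r (w.u r)

/-- The functional `I_λ⁻` (its real-valued expression, valid on `K`). -/
def IlamMinus (q lam : ℝ) (b : ℝ → ℝ) (f : ℝ → ℝ → ℝ) (w : SpaceA N R) : ℝ :=
  w.PsiR - (lam / q) * (∫ r in Set.Ioo (0 : ℝ) R, r ^ (N - 1) * b r * |max (-w.u r) 0| ^ q)
    - ∫ r in Set.Ioo (0 : ℝ) R, r ^ (N - 1) * Fint (fminus R f) r (w.u r)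

/-- The full functional `I_λ` (its real-valued expression, valid on `K`), with `F` the
primitive of the extension `f̂`. -/
def IlamFull (q lam : ℝ) (b : ℝ → ℝ) (f : ℝ → ℝ → ℝ) (w : SpaceA N R) : ℝ :=
  w.PsiR - (lam / q) * (∫ r in Set.Ioo (0 : ℝ) R, r ^ (N - 1) * b r * |w.u r| ^ q)
    - ∫ r in Set.Ioo (0 : ℝ) R, r ^ (N - 1) * Fint (fhat R f) r (w.u r)

/-- The functional `I_λ` with `F` the primitive of `f` itself. -/
def Ilam (q lam : ℝ) (b : ℝ → ℝ) (f : ℝ → ℝ → ℝ) (w : SpaceA N R) : ℝ :=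
  w.PsiR - (lam / q) * (∫ r in Set.Ioo (0 : ℝ) R, r ^ (N - 1) * b r * |w.u r| ^ q)
    - ∫ r in Set.Ioo (0 : ℝ) R, r ^ (N - 1) * Fint f r (w.u r)

/-- Weighted `L^∞` estimate: `‖r^m u‖_∞ ≤ C(N,m,R) ‖u‖` for `m > (N-2)/2`. -/
theorem weighted_sup_estimate
    (N : ℕ) (hN : 2 ≤ N) (R : ℝ) (hR : 0 < R) (m : ℝ) (hm : ((N : ℝ) - 2) / 2 < m) :
    ∃ C : ℝ, ∀ w : SpaceA N R, ∀ r ∈ Set.Ioc (0 : ℝ) R,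
      r ^ m * |w.u r| ≤ C * Real.sqrt w.normSq := by
  have hN2 : (2 : ℝ) ≤ (N : ℝ) := by exact_mod_cast hN
  have hm0 : 0 < m := lt_of_le_of_lt (by linarith) hm
  have hexp : 0 < 2 * m + 2 - N := by linarith
  refine ⟨Real.sqrt (2 / m * R ^ (2 * m + 2 - (N : ℝ))), ?_⟩
  intro w r hr
  obtain ⟨hr0, hrR⟩ := hr
  set e : ℝ := 2 + m - N with he
  have hcast : ((N - 1 : ℕ) : ℝ) = (N : ℝ) - 1 := by
    rw [Nat.cast_sub (le_trans one_le_two hN), Nat.cast_one]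
  -- measurability of d
  have hd_deriv : ∀ t ∈ Set.Ioc r R, w.d t = deriv w.u t := fun t ht =>
    ((w.hasDeriv t ⟨hr0.trans ht.1, ht.2⟩).deriv).symm
  have hmeas : AEStronglyMeasurable w.d (volume.restrict (Set.Ioc r R)) := by
    refine (measurable_deriv w.u).aestronglyMeasurable.congr ?_
    exact (ae_restrict_mem measurableSet_Ioc).mono fun t ht => (hd_deriv t ht).symm
  -- integrability facts
  have hInt2 : IntegrableOn (fun t => t ^ (N - 1) * w.d t ^ 2) (Set.Ioc r R) := by
    rw [integrableOn_Ioc_iff_integrableOn_Ioo]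
    exact w.sq_integrable.mono_set (Set.Ioo_subset_Ioo hr0.le le_rfl)
  have hrpow_pos : (0 : ℝ) < r ^ (N - 1) := pow_pos hr0 _
  have hIntsq : IntegrableOn (fun t => w.d t ^ 2) (Set.Ioc r R) := by
    refine Integrable.mono' (hInt2.const_mul (r ^ (N - 1))⁻¹) ?_ ?_
    · exact (hmeas.mul hmeas).congr (Eventually.of_forall fun t => (pow_two _).symm)
    · filter_upwards [ae_restrict_mem measurableSet_Ioc] with t ht
      rw [Real.norm_eq_abs, abs_of_nonneg (sq_nonneg _), le_inv_mul_iff₀ hrpow_pos]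
      exact mul_le_mul_of_nonneg_right (pow_le_pow_left₀ hr0.le ht.1.le _) (sq_nonneg _)
  have hIntd : IntegrableOn w.d (Set.Ioc r R) := by
    have hconst : IntegrableOn (fun _ : ℝ => (1 : ℝ)) (Set.Ioc r R) :=
      integrableOn_const measure_Ioc_lt_top.ne
    refine Integrable.mono' (hconst.add hIntsq) hmeas ?_
    refine Eventually.of_forall fun t => ?_
    simp only [Pi.add_apply, Real.norm_eq_abs]
    nlinarith [sq_nonneg (|w.d t| - 1), sq_abs (w.d t), abs_nonneg (w.d t)]
  -- FTC
  have hftc : ∫ t in r..R, w.d t = w.u R - w.u r := by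
    refine intervalIntegral.integral_eq_sub_of_hasDerivAt (fun t ht => ?_) ?_
    · rw [Set.uIcc_of_le hrR] at ht
      exact w.hasDeriv t ⟨hr0.trans_le ht.1, ht.2⟩
    · exact (intervalIntegrable_iff_integrableOn_Ioc_of_le hrR).2 hIntd
  have hur : |w.u r| ≤ ∫ t in Set.Ioc r R, |w.d t| := by
    have h1 : |w.u r| = |∫ t in r..R, w.d t| := by
      rw [hftc, w.boundary, zero_sub, abs_neg]
    rw [h1, ← intervalIntegral.integral_of_le hrR]
    exact intervalIntegral.abs_integral_le_integral_abs hrR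
  -- Hölder setup
  set h : ℝ → ℝ := fun t => t ^ (((1 : ℝ) - N) / 2) with hh
  set k : ℝ → ℝ := fun t => t ^ (((N : ℝ) - 1) / 2) * |w.d t| with hk
  have hIntA : IntegrableOn (fun t : ℝ => t ^ ((1 : ℝ) - N)) (Set.Ioc r R) := by
    refine ((continuousOn_id.rpow_const fun t ht =>
      Or.inl (ne_of_gt (hr0.trans_le ht.1))).integrableOn_Icc).mono_set Set.Ioc_subset_Icc_self
  have hhsq : ∀ t : ℝ, 0 < t → h t ^ 2 = t ^ ((1 : ℝ) - N) := by
    intro t ht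
    rw [hh, ← Real.rpow_natCast (t ^ (((1 : ℝ) - N) / 2)) 2, ← Real.rpow_mul ht.le]
    norm_num
  have hksq : ∀ t : ℝ, 0 < t → k t ^ 2 = t ^ (N - 1) * w.d t ^ 2 := by
    intro t ht
    have h1 : (t ^ (((N : ℝ) - 1) / 2)) ^ 2 = t ^ (N - 1 : ℕ) := by
      rw [← Real.rpow_natCast (t ^ (((N : ℝ) - 1) / 2)) 2, ← Real.rpow_mul ht.le,
        ← Real.rpow_natCast t (N - 1), hcast]
      norm_num
    rw [hk, mul_pow, sq_abs, h1]
  have hcont1 : ContinuousOn (fun t : ℝ => t ^ (((1 : ℝ) - N) / 2)) (Set.Ioc r R) :=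
    continuousOn_id.rpow_const fun t ht => Or.inl (ne_of_gt (hr0.trans ht.1))
  have hcont2 : ContinuousOn (fun t : ℝ => t ^ (((N : ℝ) - 1) / 2)) (Set.Ioc r R) :=
    continuousOn_id.rpow_const fun t ht => Or.inl (ne_of_gt (hr0.trans ht.1))
  have hhsm : AEStronglyMeasurable h (volume.restrict (Set.Ioc r R)) :=
    hcont1.aestronglyMeasurable measurableSet_Ioc
  have hksm : AEStronglyMeasurable k (volume.restrict (Set.Ioc r R)) :=
    (hcont2.aestronglyMeasurable measurableSet_Ioc).mul
      (hmeas.norm.congr (Eventually.of_forall fun t => Real.norm_eq_abs _))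
  have hhm : MemLp h (ENNReal.ofReal 2) (volume.restrict (Set.Ioc r R)) := by
    rw [show ENNReal.ofReal 2 = 2 by norm_num]
    refine (memLp_two_iff_integrable_sq hhsm).2 ?_
    refine hIntA.congr ?_
    filter_upwards [ae_restrict_mem measurableSet_Ioc] with t ht
    exact (hhsq t (hr0.trans ht.1)).symm
  have hkm : MemLp k (ENNReal.ofReal 2) (volume.restrict (Set.Ioc r R)) := by
    rw [show ENNReal.ofReal 2 = 2 by norm_num]
    refine (memLp_two_iff_integrable_sq hksm).2 ?_
    refine hInt2.congr ?_
    filter_upwards [ae_restrict_mem measurableSet_Ioc] with t ht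
    exact (hksq t (hr0.trans ht.1)).symm
  have holder := MeasureTheory.integral_mul_norm_le_Lp_mul_Lq
    (μ := volume.restrict (Set.Ioc r R)) (p := 2) (q := 2) ⟨by norm_num, by norm_num, by norm_num⟩ hhm hkm
  set A : ℝ := ∫ t in Set.Ioc r R, t ^ ((1 : ℝ) - N) with hA
  set K : ℝ := ∫ t in Set.Ioc r R, t ^ (N - 1) * w.d t ^ 2 with hK
  have hA_nonneg : 0 ≤ A := setIntegral_nonneg measurableSet_Ioc fun t ht =>
    Real.rpow_nonneg (hr0.trans ht.1).le _
  have hK_nonneg : 0 ≤ K := setIntegral_nonneg measurableSet_Ioc fun t ht =>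
    mul_nonneg (pow_nonneg (hr0.trans ht.1).le _) (sq_nonneg _)
  have hd_holder : (∫ t in Set.Ioc r R, |w.d t|) ≤ A ^ ((1 : ℝ) / 2) * K ^ ((1 : ℝ) / 2) := by
    have e1 : (∫ t in Set.Ioc r R, |w.d t|) = ∫ t in Set.Ioc r R, ‖h t‖ * ‖k t‖ := by
      refine setIntegral_congr_ae measurableSet_Ioc ?_
      refine Eventually.of_forall fun t ht => ?_
      have ht0 : 0 < t := hr0.trans ht.1
      rw [Real.norm_eq_abs, Real.norm_eq_abs, hh, hk,
        abs_of_nonneg (Real.rpow_nonneg ht0.le _),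
        abs_of_nonneg (mul_nonneg (Real.rpow_nonneg ht0.le _) (abs_nonneg _)),
        ← mul_assoc, ← Real.rpow_add ht0,
        show ((1 : ℝ) - N) / 2 + ((N : ℝ) - 1) / 2 = 0 by ring, Real.rpow_zero, one_mul]
    have e2 : (∫ t in Set.Ioc r R, ‖h t‖ ^ (2 : ℝ)) = A := by
      refine setIntegral_congr_ae measurableSet_Ioc ?_
      refine Eventually.of_forall fun t ht => ?_
      have ht0 : 0 < t := hr0.trans ht.1
      rw [Real.norm_eq_abs, abs_of_nonneg (Real.rpow_nonneg ht0.le _), Real.rpow_two]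
      exact hhsq t ht0
    have e3 : (∫ t in Set.Ioc r R, ‖k t‖ ^ (2 : ℝ)) = K := by
      refine setIntegral_congr_ae measurableSet_Ioc ?_
      refine Eventually.of_forall fun t ht => ?_
      have ht0 : 0 < t := hr0.trans ht.1
      rw [Real.norm_eq_abs, abs_of_nonneg
        (mul_nonneg (Real.rpow_nonneg ht0.le _) (abs_nonneg _)), Real.rpow_two]
      exact hksq t ht0
    calc (∫ t in Set.Ioc r R, |w.d t|) = ∫ t in Set.Ioc r R, ‖h t‖ * ‖k t‖ := e1
      _ ≤ (∫ t in Set.Ioc r R, ‖h t‖ ^ (2 : ℝ)) ^ ((1:ℝ)/2) *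
          (∫ t in Set.Ioc r R, ‖k t‖ ^ (2 : ℝ)) ^ ((1:ℝ)/2) := holder
      _ = A ^ ((1 : ℝ) / 2) * K ^ ((1 : ℝ) / 2) := by rw [e2, e3]
  -- bound on A
  have hIntApow : IntegrableOn (fun t : ℝ => (r ^ e + R ^ e) * t ^ (-1 - m))
      (Set.Ioc r R) := by
    refine Integrable.const_mul ?_ _
    refine ((continuousOn_id.rpow_const fun t ht =>
      Or.inl (ne_of_gt (hr0.trans_le ht.1))).integrableOn_Icc).mono_set Set.Ioc_subset_Icc_self
  have hAle : A ≤ (r ^ e + R ^ e) * (r ^ (-m) / m) := by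
    have h1 : A ≤ ∫ t in Set.Ioc r R, (r ^ e + R ^ e) * t ^ (-1 - m) := by
      refine setIntegral_mono_on hIntA hIntApow measurableSet_Ioc fun t ht => ?_
      have ht0 : 0 < t := hr0.trans ht.1
      have hsplit : t ^ ((1 : ℝ) - N) = t ^ e * t ^ (-1 - m) := by
        rw [← Real.rpow_add ht0]; congr 1; rw [he]; ring
      rw [hsplit]
      refine mul_le_mul_of_nonneg_right ?_ (Real.rpow_nonneg ht0.le _)
      rcases le_or_gt 0 e with hE | hE
      · exact le_add_of_nonneg_of_le (Real.rpow_nonneg hr0.le _)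
          (Real.rpow_le_rpow ht0.le ht.2 hE)
      · exact le_add_of_le_of_nonneg
          (Real.rpow_le_rpow_of_nonpos hr0 ht.1.le hE.le) (Real.rpow_nonneg hR.le _)
    have h2 : (∫ t in Set.Ioc r R, t ^ (-1 - m)) = (r ^ (-m) - R ^ (-m)) / m := by
      rw [← intervalIntegral.integral_of_le hrR, integral_rpow]
      · have hme : -1 - m + 1 = -m := by ring
        have hm' : m ≠ 0 := hm0.ne'
        rw [hme, div_neg, ← neg_div, neg_sub]
      · refine Or.inr ⟨by intro hcontra; exact absurd hcontra (by linarith), ?_⟩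
        rw [Set.uIcc_of_le hrR]
        intro hmem
        exact absurd hmem.1 (not_le.2 hr0)
    calc A ≤ ∫ t in Set.Ioc r R, (r ^ e + R ^ e) * t ^ (-1 - m) := h1
      _ = (r ^ e + R ^ e) * ((r ^ (-m) - R ^ (-m)) / m) := by
          rw [integral_const_mul, h2]
      _ ≤ (r ^ e + R ^ e) * (r ^ (-m) / m) := by
          have h3 : r ^ (-m) - R ^ (-m) ≤ r ^ (-m) := by
            simp [Real.rpow_nonneg hR.le]
          refine mul_le_mul_of_nonneg_left ?_
            (add_nonneg (Real.rpow_nonneg hr0.le _) (Real.rpow_nonneg hR.le _))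
          gcongr
  -- bound on K
  have hKle : K ≤ w.normSq := by
    refine setIntegral_mono_set w.sq_integrable ?_ ?_
    · filter_upwards [ae_restrict_mem measurableSet_Ioo] with t ht
      exact mul_nonneg (pow_nonneg ht.1.le _) (sq_nonneg _)
    · rw [ae_le_set]
      refine measure_mono_null ?_ (measure_singleton R)
      intro t ht
      simp only [Set.mem_diff, Set.mem_Ioc, Set.mem_Ioo, not_and, not_lt] at ht
      exact Set.mem_singleton_iff.2 (le_antisymm ht.1.2 (ht.2 (hr0.trans ht.1.1)))
  -- final assembly
  have hC1 : r ^ m * A ^ ((1 : ℝ) / 2) ≤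
      Real.sqrt (2 / m * R ^ (2 * m + 2 - (N : ℝ))) := by
    rw [← Real.sqrt_eq_rpow]
    have hrm : (0 : ℝ) ≤ r ^ m := Real.rpow_nonneg hr0.le _
    rw [← Real.sqrt_sq hrm, ← Real.sqrt_mul (sq_nonneg _)]
    refine Real.sqrt_le_sqrt ?_
    have hsq : (r ^ m) ^ 2 = r ^ (2 * m) := by
      rw [← Real.rpow_natCast (r ^ m) 2, ← Real.rpow_mul hr0.le,
        show m * ((2 : ℕ) : ℝ) = 2 * m by push_cast; ring]
    calc (r ^ m) ^ 2 * A ≤ r ^ (2 * m) * ((r ^ e + R ^ e) * (r ^ (-m) / m)) := by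
          rw [hsq]
          exact mul_le_mul_of_nonneg_left hAle (Real.rpow_nonneg hr0.le _)
      _ = (1 / m) * (r ^ (2 * m) * r ^ (-m) * r ^ e + r ^ (2 * m) * r ^ (-m) * R ^ e) := by
          ring
      _ = (1 / m) * (r ^ (m + e) + r ^ m * R ^ e) := by
          have hid : r ^ (2 * m) * r ^ (-m) = r ^ m := by
            rw [← Real.rpow_add hr0, show 2 * m + -m = m by ring]
          rw [hid, ← Real.rpow_add hr0]
      _ ≤ (1 / m) * (R ^ (2 * m + 2 - (N : ℝ)) + R ^ (2 * m + 2 - (N : ℝ))) := by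
          refine mul_le_mul_of_nonneg_left ?_ (by positivity)
          refine add_le_add ?_ ?_
          · have : m + e = 2 * m + 2 - (N : ℝ) := by rw [he]; ring
            rw [this]
            exact Real.rpow_le_rpow hr0.le hrR hexp.le
          · have hRe : R ^ m * R ^ e = R ^ (2 * m + 2 - (N : ℝ)) := by
              rw [← Real.rpow_add hR]; congr 1; rw [he]; ring
            calc r ^ m * R ^ e ≤ R ^ m * R ^ e :=
                  mul_le_mul_of_nonneg_right (Real.rpow_le_rpow hr0.le hrR hm0.le)
                    (Real.rpow_nonneg hR.le _)
              _ = R ^ (2 * m + 2 - (N : ℝ)) := hRe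
      _ = 2 / m * R ^ (2 * m + 2 - (N : ℝ)) := by ring
  have hC2 : K ^ ((1 : ℝ) / 2) ≤ Real.sqrt w.normSq := by
    rw [← Real.sqrt_eq_rpow]
    exact Real.sqrt_le_sqrt hKle
  calc r ^ m * |w.u r| ≤ r ^ m * (∫ t in Set.Ioc r R, |w.d t|) :=
        mul_le_mul_of_nonneg_left hur (Real.rpow_nonneg hr0.le _)
    _ ≤ r ^ m * (A ^ ((1 : ℝ) / 2) * K ^ ((1 : ℝ) / 2)) :=
        mul_le_mul_of_nonneg_left hd_holder (Real.rpow_nonneg hr0.le _)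
    _ = (r ^ m * A ^ ((1 : ℝ) / 2)) * K ^ ((1 : ℝ) / 2) := by ring
    _ ≤ Real.sqrt (2 / m * R ^ (2 * m + 2 - (N : ℝ))) * Real.sqrt w.normSq :=
        mul_le_mul hC1 hC2 (Real.rpow_nonneg hK_nonneg _) (Real.sqrt_nonneg _)
end
end

section
/- (Weighted Sobolev/Poincaré inequality.) Let R > 0 and suppose either N ≥ 3 is an integer and p ∈ [1, 2N/(N−2)), or N = 2 and p ∈ [1, +∞). Then there exists a constant C(N,p,R) such that for every u ∈ 𝒜, ∫₀^R r^{N-1}|u(r)|^p dr ≤ C(N,p,R) (∫₀^R r^{N-1}|u'(r)|² dr)^{p/2}. -/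
open MeasureTheory Set Filter
open scoped Classical

noncomputable section

variable {N : ℕ} {R : ℝ}

section AuxSobolev

private lemma amgm_opt {x W S : ℝ} (hW : 0 < W) (hS : 0 ≤ S)
    (h : ∀ a : ℝ, 0 < a → x ≤ (a * W + a⁻¹ * S) / 2) : x ≤ Real.sqrt (S * W) := by
  rcases hS.eq_or_lt with hS0 | hS0
  · have hx : x ≤ 0 := by
      apply le_of_forall_pos_le_add
      intro ε hε
      have h2 := h (2 * ε / W) (by positivity)
      rw [← hS0] at h2
      have he : 2 * ε / W * W + (2 * ε / W)⁻¹ * 0 = 2 * ε := by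
        field_simp
        ring
      rw [he] at h2; linarith
    exact hx.trans (Real.sqrt_nonneg _)
  · have hc : 0 < Real.sqrt (S * W) := Real.sqrt_pos.mpr (mul_pos hS0 hW)
    have hc2 : Real.sqrt (S * W) * Real.sqrt (S * W) = S * W :=
      Real.mul_self_sqrt (by positivity)
    have h2 := h (Real.sqrt (S * W) / W) (by positivity)
    have he : Real.sqrt (S * W) / W * W + (Real.sqrt (S * W) / W)⁻¹ * S
        = 2 * Real.sqrt (S * W) := by
      have hdm : Real.sqrt (S * W) / W * W = Real.sqrt (S * W) :=
        div_mul_cancel₀ _ hW.ne'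
      have hinv : (Real.sqrt (S * W) / W)⁻¹ * S = Real.sqrt (S * W) := by
        rw [inv_div, div_mul_eq_mul_div,
          show W * S = Real.sqrt (S * W) * Real.sqrt (S * W) by rw [hc2]; ring,
          mul_div_assoc, div_self hc.ne', mul_one]
      rw [hdm, hinv]; ring
    rw [he] at h2; linarith

private lemma spaceA_pointwise_bound {N : ℕ} {R : ℝ} (hN : 2 ≤ N) (hR : 0 < R)
    (w : SpaceA N R) {δ : ℝ} (hδ : 0 < δ) {r : ℝ} (hr : r ∈ Set.Ioo (0 : ℝ) R) :
    |w.u r| ≤ Real.sqrt (w.normSq * (R ^ δ / δ * r ^ (2 - (N : ℝ) - δ))) := by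
  obtain ⟨hr0, hrR⟩ := hr
  have hle : r ≤ R := hrR.le
  have hn2 : (2 : ℝ) ≤ (N : ℝ) := by exact_mod_cast hN
  have hS0 : 0 ≤ w.normSq :=
    MeasureTheory.setIntegral_nonneg measurableSet_Ioo
      (fun t ht => mul_nonneg (pow_nonneg ht.1.le _) (sq_nonneg _))
  have hW : 0 < R ^ δ / δ * r ^ (2 - (N : ℝ) - δ) := by positivity
  apply amgm_opt hW hS0
  intro a ha
  have hrp : (0 : ℝ) < r ^ (N - 1) := pow_pos hr0 _
  have hInt2 : MeasureTheory.IntegrableOn (fun t : ℝ => t ^ (N - 1) * w.d t ^ 2)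
      (Set.Ioo r R) := w.sq_integrable.mono_set (Set.Ioo_subset_Ioo hr0.le le_rfl)
  have hIntIoc : MeasureTheory.IntegrableOn (fun t : ℝ => t ^ (N - 1) * w.d t ^ 2)
      (Set.Ioc r R) := (integrableOn_Ioc_iff_integrableOn_Ioo enorm_ne_top).mpr hInt2
  have hd_meas : MeasureTheory.AEStronglyMeasurable w.d (volume.restrict (Set.Ioc r R)) := by
    refine ((measurable_deriv w.u).aestronglyMeasurable).congr ?_
    refine (MeasureTheory.ae_restrict_iff' measurableSet_Ioc).mpr (Filter.Eventually.of_forall ?_)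
    intro t ht
    exact ((w.hasDeriv t ⟨hr0.trans ht.1, ht.2⟩)).deriv
  have hd_int : MeasureTheory.IntegrableOn w.d (Set.Ioc r R) := by
    refine MeasureTheory.Integrable.mono'
      (g := fun t => 1 + (r ^ (N - 1))⁻¹ * (t ^ (N - 1) * w.d t ^ 2)) ?_ hd_meas ?_
    · exact (MeasureTheory.integrableOn_const measure_Ioc_lt_top.ne).add
        (hIntIoc.const_mul _)
    · refine (MeasureTheory.ae_restrict_iff' measurableSet_Ioc).mpr
        (Filter.Eventually.of_forall ?_)
      intro t ht
      have h1 : r ^ (N - 1) ≤ t ^ (N - 1) := pow_le_pow_left₀ hr0.le ht.1.le _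
      have hinv : 1 ≤ (r ^ (N - 1))⁻¹ * t ^ (N - 1) := by
        rw [inv_mul_eq_div, le_div_iff₀ hrp]; simpa using h1
      have h3 : w.d t ^ 2 * 1 ≤ w.d t ^ 2 * ((r ^ (N - 1))⁻¹ * t ^ (N - 1)) :=
        mul_le_mul_of_nonneg_left hinv (sq_nonneg _)
      have habs : |w.d t| ≤ 1 + w.d t ^ 2 := by
        nlinarith [sq_nonneg (|w.d t| - 1), sq_abs (w.d t)]
      rw [Real.norm_eq_abs]
      nlinarith [habs, h3]
  have hd_ii : IntervalIntegrable w.d volume r R :=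
    (intervalIntegrable_iff_integrableOn_Ioc_of_le hle).mpr hd_int
  have hftc : ∫ t in r..R, w.d t = w.u R - w.u r := by
    apply intervalIntegral.integral_eq_sub_of_hasDerivAt ?_ hd_ii
    intro x hx
    rw [Set.uIcc_of_le hle] at hx
    exact w.hasDeriv x ⟨hr0.trans_le hx.1, hx.2⟩
  have habs : |w.u r| ≤ ∫ t in r..R, |w.d t| := by
    have hur : |w.u r| = |∫ t in r..R, w.d t| := by
      rw [hftc, w.boundary, zero_sub, abs_neg]
    rw [hur]
    exact intervalIntegral.abs_integral_le_integral_abs hle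
  have hg1 : IntervalIntegrable (fun t : ℝ => t ^ (δ - 1)) volume r R :=
    intervalIntegral.intervalIntegrable_rpow' (by linarith)
  have hg2 : IntervalIntegrable (fun t : ℝ => t ^ (N - 1) * w.d t ^ 2) volume r R :=
    (intervalIntegrable_iff_integrableOn_Ioc_of_le hle).mpr hIntIoc
  have hpt : ∀ t ∈ Set.Icc r R, |w.d t| ≤
      (a * r ^ (2 - (N : ℝ) - δ) * t ^ (δ - 1) + a⁻¹ * (t ^ (N - 1) * w.d t ^ 2)) / 2 := by
    intro t ht
    have ht0 : 0 < t := hr0.trans_le ht.1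
    have htp : (0 : ℝ) < t ^ (N - 1) := pow_pos ht0 _
    have hX0 : (0 : ℝ) ≤ a * (t ^ (N - 1))⁻¹ := by positivity
    have hY0 : (0 : ℝ) ≤ a⁻¹ * (t ^ (N - 1) * w.d t ^ 2) := by positivity
    have hXY : a * (t ^ (N - 1))⁻¹ * (a⁻¹ * (t ^ (N - 1) * w.d t ^ 2)) = w.d t ^ 2 := by
      field_simp
    have h2 := two_mul_le_add_sq (Real.sqrt (a * (t ^ (N - 1))⁻¹))
      (Real.sqrt (a⁻¹ * (t ^ (N - 1) * w.d t ^ 2)))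
    rw [Real.sq_sqrt hX0, Real.sq_sqrt hY0] at h2
    have hsq : Real.sqrt (a * (t ^ (N - 1))⁻¹) * Real.sqrt (a⁻¹ * (t ^ (N - 1) * w.d t ^ 2))
        = |w.d t| := by
      rw [← Real.sqrt_mul hX0, hXY, Real.sqrt_sq_eq_abs]
    have h2' : 2 * |w.d t| ≤ a * (t ^ (N - 1))⁻¹ + a⁻¹ * (t ^ (N - 1) * w.d t ^ 2) := by
      calc 2 * |w.d t| = 2 * Real.sqrt (a * (t ^ (N - 1))⁻¹) *
            Real.sqrt (a⁻¹ * (t ^ (N - 1) * w.d t ^ 2)) := by rw [mul_assoc, hsq]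
        _ ≤ _ := h2
    have hbase : ((t : ℝ) ^ (N - 1))⁻¹ ≤ r ^ (2 - (N : ℝ) - δ) * t ^ (δ - 1) := by
      have hcast : ((N - 1 : ℕ) : ℝ) = (N : ℝ) - 1 := by
        rw [Nat.cast_sub (by omega), Nat.cast_one]
      have he1 : ((t : ℝ) ^ (N - 1))⁻¹ = t ^ (1 - (N : ℝ)) := by
        rw [← Real.rpow_natCast t (N - 1), ← Real.rpow_neg ht0.le, hcast]
        norm_num
      rw [he1, show (1 - (N : ℝ)) = (2 - (N : ℝ) - δ) + (δ - 1) by ring, Real.rpow_add ht0]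
      have hb2 : t ^ (2 - (N : ℝ) - δ) ≤ r ^ (2 - (N : ℝ) - δ) :=
        Real.rpow_le_rpow_of_nonpos hr0 ht.1 (by linarith)
      exact mul_le_mul_of_nonneg_right hb2 (Real.rpow_nonneg ht0.le _)
    have hax : a * (t ^ (N - 1))⁻¹ ≤ a * r ^ (2 - (N : ℝ) - δ) * t ^ (δ - 1) := by
      rw [mul_assoc]
      exact mul_le_mul_of_nonneg_left hbase ha.le
    linarith [h2', hax]
  have hmono := intervalIntegral.integral_mono_on hle hd_ii.abs
    (((hg1.const_mul _).add (hg2.const_mul _)).div_const 2) hpt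
  rw [intervalIntegral.integral_div,
    intervalIntegral.integral_add (hg1.const_mul _) (hg2.const_mul _),
    intervalIntegral.integral_const_mul, intervalIntegral.integral_const_mul] at hmono
  have hIval : ∫ t in r..R, t ^ (δ - 1) = (R ^ δ - r ^ δ) / δ := by
    rw [integral_rpow (Or.inl (by linarith : (-1 : ℝ) < δ - 1)),
      show δ - 1 + 1 = δ by ring]
  have hIR : ∫ t in r..R, t ^ (δ - 1) ≤ R ^ δ / δ := by
    rw [hIval]
    have h := Real.rpow_nonneg hr0.le δ
    gcongr
    linarith
  have hI2 : ∫ t in r..R, t ^ (N - 1) * w.d t ^ 2 ≤ w.normSq := by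
    rw [intervalIntegral.integral_of_le hle, MeasureTheory.integral_Ioc_eq_integral_Ioo]
    apply MeasureTheory.setIntegral_mono_set w.sq_integrable
    · refine (MeasureTheory.ae_restrict_iff' measurableSet_Ioo).mpr
        (Filter.Eventually.of_forall fun t ht => ?_)
      exact mul_nonneg (pow_nonneg ht.1.le _) (sq_nonneg _)
    · exact (Set.Ioo_subset_Ioo hr0.le le_rfl).eventuallyLE
  calc |w.u r| ≤ ∫ t in r..R, |w.d t| := habs
    _ ≤ (a * r ^ (2 - (N : ℝ) - δ) * (∫ t in r..R, t ^ (δ - 1)) +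
        a⁻¹ * (∫ t in r..R, t ^ (N - 1) * w.d t ^ 2)) / 2 := hmono
    _ ≤ (a * (R ^ δ / δ * r ^ (2 - (N : ℝ) - δ)) + a⁻¹ * w.normSq) / 2 := by
        have e1 : a * (R ^ δ / δ * r ^ (2 - (N : ℝ) - δ))
            = a * r ^ (2 - (N : ℝ) - δ) * (R ^ δ / δ) := by ring
        rw [e1]
        have hc1 : (0 : ℝ) ≤ a * r ^ (2 - (N : ℝ) - δ) := by positivity
        gcongr

end AuxSobolev

/-- Weighted Sobolev/Poincaré inequality: `∫₀^R r^{N-1}|u|^p dr ≤ C(N,p,R)‖u‖^p`. -/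
theorem weighted_sobolev_inequality
    (N : ℕ) (R : ℝ) (hR : 0 < R) (p : ℝ)
    (hNp : (3 ≤ N ∧ 1 ≤ p ∧ p < 2 * (N : ℝ) / ((N : ℝ) - 2)) ∨ (N = 2 ∧ 1 ≤ p)) :
    ∃ C : ℝ, 0 < C ∧ ∀ w : SpaceA N R,
      (∫⁻ r in Set.Ioo (0 : ℝ) R, ENNReal.ofReal (r ^ (N - 1) * |w.u r| ^ p)) ≤
        ENNReal.ofReal (C * w.normSq ^ (p / 2)) := by
  have hN2 : 2 ≤ N := by rcases hNp with ⟨h, _⟩ | ⟨h, _⟩ <;> omega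
  have hp1 : 1 ≤ p := by rcases hNp with ⟨_, h, _⟩ | ⟨_, h⟩ <;> exact h
  have hp0 : (0 : ℝ) < p := lt_of_lt_of_le one_pos hp1
  have hn2 : (2 : ℝ) ≤ (N : ℝ) := by exact_mod_cast hN2
  have hkey : p * ((N : ℝ) - 2) < 2 * (N : ℝ) := by
    rcases hNp with ⟨h3, _, hlt⟩ | ⟨h2, _⟩
    · have h3' : (3 : ℝ) ≤ (N : ℝ) := by exact_mod_cast h3
      rw [lt_div_iff₀ (by linarith)] at hlt
      linarith
    · subst h2; norm_num
  set ε : ℝ := (2 * (N : ℝ) - p * ((N : ℝ) - 2)) / p with hεdef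
  have hε : 0 < ε := div_pos (by linarith) hp0
  set δ : ℝ := ε / 2 with hδdef
  have hδ : 0 < δ := by positivity
  set α : ℝ := ((N : ℝ) - 1) + (2 - (N : ℝ) - δ) * (p / 2) with hαdef
  have hpε : p * ε = 2 * (N : ℝ) - p * ((N : ℝ) - 2) := by
    rw [hεdef]; field_simp
  have hα1 : 0 < α + 1 := by
    rw [hαdef, hδdef]; nlinarith [hpε, mul_pos hp0 hε]
  have hα : (-1 : ℝ) < α := by linarith
  have hM : 0 < R ^ δ / δ := by positivity
  refine ⟨(R ^ δ / δ) ^ (p / 2) * (R ^ (α + 1) / (α + 1)), by positivity, fun w => ?_⟩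
  have hS0 : 0 ≤ w.normSq :=
    MeasureTheory.setIntegral_nonneg measurableSet_Ioo
      (fun t ht => mul_nonneg (pow_nonneg ht.1.le _) (sq_nonneg _))
  set K : ℝ := (w.normSq * (R ^ δ / δ)) ^ (p / 2) with hKdef
  have hK0 : 0 ≤ K := Real.rpow_nonneg (by positivity) _
  have hpb : ∀ r ∈ Set.Ioo (0 : ℝ) R, r ^ (N - 1) * |w.u r| ^ p ≤ K * r ^ α := by
    intro r hr
    have hr0 := hr.1
    have h1 := spaceA_pointwise_bound hN2 hR w hδ hr
    have hWs : 0 ≤ w.normSq * (R ^ δ / δ * r ^ (2 - (N : ℝ) - δ)) := by positivity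
    have h2 : |w.u r| ^ p ≤ (w.normSq * (R ^ δ / δ * r ^ (2 - (N : ℝ) - δ))) ^ (p / 2) := by
      calc |w.u r| ^ p
          ≤ Real.sqrt (w.normSq * (R ^ δ / δ * r ^ (2 - (N : ℝ) - δ))) ^ p :=
            Real.rpow_le_rpow (abs_nonneg _) h1 hp0.le
        _ = _ := by
            rw [Real.sqrt_eq_rpow, ← Real.rpow_mul hWs, one_div_mul_eq_div]
    have h3 : (w.normSq * (R ^ δ / δ * r ^ (2 - (N : ℝ) - δ))) ^ (p / 2)
        = K * r ^ ((2 - (N : ℝ) - δ) * (p / 2)) := by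
      rw [show w.normSq * (R ^ δ / δ * r ^ (2 - (N : ℝ) - δ))
          = (w.normSq * (R ^ δ / δ)) * r ^ (2 - (N : ℝ) - δ) by ring,
        Real.mul_rpow (by positivity) (Real.rpow_nonneg hr0.le _),
        ← Real.rpow_mul hr0.le, hKdef]
    calc r ^ (N - 1) * |w.u r| ^ p
        ≤ r ^ (N - 1) * (K * r ^ ((2 - (N : ℝ) - δ) * (p / 2))) :=
          mul_le_mul_of_nonneg_left (h2.trans (le_of_eq h3)) (pow_nonneg hr0.le _)
      _ = K * r ^ α := by
          have hcast : ((N - 1 : ℕ) : ℝ) = (N : ℝ) - 1 := by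
            rw [Nat.cast_sub (by omega), Nat.cast_one]
          rw [← Real.rpow_natCast r (N - 1), hcast, hαdef, Real.rpow_add hr0]
          ring
  have hKα_meas : Measurable (fun r : ℝ => ENNReal.ofReal (K * r ^ α)) :=
    ENNReal.measurable_ofReal.comp (measurable_const.mul (measurable_id.pow_const α))
  have hint : MeasureTheory.IntegrableOn (fun r : ℝ => r ^ α) (Set.Ioo (0 : ℝ) R) := by
    have hii : IntervalIntegrable (fun x : ℝ => x ^ α) volume 0 R :=
      intervalIntegral.intervalIntegrable_rpow' hα
    exact ((intervalIntegrable_iff_integrableOn_Ioc_of_le hR.le).mp hii).mono_set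
      Set.Ioo_subset_Ioc_self
  have hnn : 0 ≤ᵐ[volume.restrict (Set.Ioo (0 : ℝ) R)] fun r : ℝ => r ^ α :=
    (MeasureTheory.ae_restrict_iff' measurableSet_Ioo).mpr
      (Filter.Eventually.of_forall fun r hr => Real.rpow_nonneg hr.1.le _)
  have hval : ∫ r in Set.Ioo (0 : ℝ) R, r ^ α = R ^ (α + 1) / (α + 1) := by
    rw [← MeasureTheory.integral_Ioc_eq_integral_Ioo, ← intervalIntegral.integral_of_le hR.le,
      integral_rpow (Or.inl hα),
      Real.zero_rpow (by linarith : α + 1 ≠ 0), sub_zero]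
  calc ∫⁻ r in Set.Ioo (0 : ℝ) R, ENNReal.ofReal (r ^ (N - 1) * |w.u r| ^ p)
      ≤ ∫⁻ r in Set.Ioo (0 : ℝ) R, ENNReal.ofReal (K * r ^ α) :=
        MeasureTheory.setLIntegral_mono hKα_meas
          (fun r hr => ENNReal.ofReal_le_ofReal (hpb r hr))
    _ = ENNReal.ofReal K * ∫⁻ r in Set.Ioo (0 : ℝ) R, ENNReal.ofReal (r ^ α) := by
        simp_rw [ENNReal.ofReal_mul hK0]
        exact MeasureTheory.lintegral_const_mul' _ _ ENNReal.ofReal_ne_top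
    _ = ENNReal.ofReal K * ENNReal.ofReal (∫ r in Set.Ioo (0 : ℝ) R, r ^ α) := by
        rw [← MeasureTheory.ofReal_integral_eq_lintegral_ofReal hint hnn]
    _ ≤ ENNReal.ofReal ((R ^ δ / δ) ^ (p / 2) * (R ^ (α + 1) / (α + 1))
          * w.normSq ^ (p / 2)) := by
        rw [hval, ← ENNReal.ofReal_mul hK0]
        apply ENNReal.ofReal_le_ofReal
        rw [hKdef, Real.mul_rpow hS0 hM.le]
        ring_nf
        exact le_refl _
end
end

section
/- Let N ≥ 3 be an integer, R > 0, 1 < q < 2, λ > 0; suppose f satisfies (F1)–(F3) and b satisfies (B). If u is a positive weak solution of (BP) (u(r) > 0 on (0,R)), then u'(r) < 0 for every r ∈ (0,R]. If u is a negative weak solution, then u'(r) > 0 for every r ∈ (0,R]. -/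
open MeasureTheory Set Filter
open scoped Classical

noncomputable section

variable {N : ℕ} {R : ℝ}

section AuxiliaryMonotonicity

open MeasureTheory

/-- Algebra: solve `d / √(1-d²) = z` for `d`, given `|d| ≤ 1` and `z < 0`. -/
private lemma solve_d_aux {d z : ℝ} (hd : |d| ≤ 1) (hz : z < 0)
    (h : d / Real.sqrt (1 - d ^ 2) = z) : d = z / Real.sqrt (1 + z ^ 2) := by
  have habs := abs_le.mp hd
  have h1 : d ^ 2 ≤ 1 := by nlinarith
  rcases eq_or_lt_of_le h1 with hcrit | h2
  · exfalso
    rw [show (1 : ℝ) - d ^ 2 = 0 by linarith, Real.sqrt_zero, div_zero] at h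
    exact absurd h.symm (ne_of_lt hz)
  have hspos : 0 < Real.sqrt (1 - d ^ 2) := Real.sqrt_pos.mpr (by linarith)
  have hs2 : Real.sqrt (1 - d ^ 2) ^ 2 = 1 - d ^ 2 := Real.sq_sqrt (by linarith)
  have hd_eq : d = z * Real.sqrt (1 - d ^ 2) := by
    rw [div_eq_iff hspos.ne'] at h
    linarith [h]
  have hdneg : d < 0 := by
    rw [hd_eq]; exact mul_neg_of_neg_of_pos hz hspos
  have htpos : 0 < Real.sqrt (1 + z ^ 2) := Real.sqrt_pos.mpr (by positivity)
  have ht2 : Real.sqrt (1 + z ^ 2) ^ 2 = 1 + z ^ 2 := Real.sq_sqrt (by positivity)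
  have hda : d ^ 2 = z ^ 2 * (1 - d ^ 2) := by
    have hh : d ^ 2 = (z * Real.sqrt (1 - d ^ 2)) ^ 2 := by rw [← hd_eq]
    rw [mul_pow, hs2] at hh
    linarith
  have hsq : (d * Real.sqrt (1 + z ^ 2)) ^ 2 = z ^ 2 := by
    rw [mul_pow, ht2]; nlinarith [hda]
  have hzero : (d * Real.sqrt (1 + z ^ 2) - z) * (d * Real.sqrt (1 + z ^ 2) + z) = 0 := by
    nlinarith [hsq]
  rcases mul_eq_zero.mp hzero with h0 | h0
  · rw [eq_div_iff htpos.ne']; linarith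
  · exfalso
    have : d * Real.sqrt (1 + z ^ 2) < 0 := mul_neg_of_neg_of_pos hdneg htpos
    linarith

/-- Key monotonicity lemma for positive weak solutions. -/
private lemma key_pos (N : ℕ) (R : ℝ) (hR : 0 < R) (q lam : ℝ) (hq1 : 1 < q)
    (hlam : 0 < lam) (f : ℝ → ℝ → ℝ) (b : ℝ → ℝ)
    (hF1 : hypF1 R f) (hF3 : hypF3 R f) (hB : hypB R b)
    (u : SpaceA N R) (hu : isWeakSol q lam b f u) (hpos : u.isPos) :
    ∀ r ∈ Set.Ioc (0 : ℝ) R, u.d r < 0 := by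
  obtain ⟨huK, huEq⟩ := hu
  obtain ⟨hbcont, b0, b1, hb0, hb01⟩ := hB
  -- Lipschitz bound on u
  have hub : ∀ r ∈ Set.Ioo (0 : ℝ) R, u.u r ≤ R - r := by
    intro r hr
    have hstep : ∀ t ∈ Set.Ioo r R, u.u r - (t - r) ≤ u.u t := by
      intro t ht
      have hIcc : Set.Icc r t ⊆ Set.Ioc (0 : ℝ) R :=
        fun x hx => ⟨lt_of_lt_of_le hr.1 hx.1, le_trans hx.2 (le_of_lt ht.2)⟩
      have hnorm := Convex.norm_image_sub_le_of_norm_hasDerivWithin_le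
        (f := u.u) (f' := u.d) (C := 1) (s := Set.Icc r t)
        (fun x hx => (u.hasDeriv x (hIcc hx)).hasDerivWithinAt)
        (fun x hx => by
          have hxIoo : x ∈ Set.Ioo (0 : ℝ) R :=
            ⟨lt_of_lt_of_le hr.1 hx.1, lt_of_le_of_lt hx.2 ht.2⟩
          simpa [Real.norm_eq_abs] using huK x hxIoo)
        (convex_Icc r t) (Set.left_mem_Icc.mpr (le_of_lt ht.1))
        (Set.right_mem_Icc.mpr (le_of_lt ht.1))
      rw [Real.norm_eq_abs, Real.norm_eq_abs, one_mul,
        abs_of_pos (sub_pos.mpr ht.1)] at hnorm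
      have := (abs_le.mp hnorm).1
      linarith
    have hcR : Filter.Tendsto u.u (nhdsWithin R (Set.Iio R)) (nhds 0) := by
      have h0 : ContinuousAt u.u R := (u.hasDeriv R ⟨hR, le_refl R⟩).continuousAt
      have hh : Filter.Tendsto u.u (nhdsWithin R (Set.Iio R)) (nhds (u.u R)) :=
        h0.tendsto.mono_left nhdsWithin_le_nhds
      rwa [u.boundary] at hh
    have hcg : Filter.Tendsto (fun t => u.u r - (t - r)) (nhdsWithin R (Set.Iio R))
        (nhds (u.u r - (R - r))) := by
      apply Filter.Tendsto.mono_left _ nhdsWithin_le_nhds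
      exact (continuous_const.sub (continuous_id.sub continuous_const)).tendsto R
    have hle := le_of_tendsto_of_tendsto hcg hcR ?_
    · linarith
    · have h1 : Set.Ioi r ∈ nhdsWithin R (Set.Iio R) := nhdsWithin_le_nhds (Ioi_mem_nhds hr.2)
      filter_upwards [h1, self_mem_nhdsWithin] with t ht1 ht2
      exact hstep t ⟨ht1, ht2⟩
  have hmaps : ∀ r ∈ Set.Ioo (0 : ℝ) R,
      (r, u.u r) ∈ Set.Icc (0 : ℝ) R ×ˢ Set.Icc (-R) R := by
    intro r hr
    have h1 := hpos r hr
    have h2 := hub r hr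
    exact ⟨⟨hr.1.le, hr.2.le⟩, ⟨by linarith, by linarith [hr.1]⟩⟩
  obtain ⟨Cf, hCf⟩ := (isCompact_Icc.prod isCompact_Icc).exists_bound_of_continuousOn hF1
  have hCf0 : 0 ≤ Cf :=
    le_trans (norm_nonneg _) (hCf (R, 0) ⟨⟨hR.le, le_rfl⟩, by
      simp only [Set.mem_Icc]
      constructor <;> linarith⟩)
  have hb0le : b0 ≤ b1 :=
    le_trans (hb01 R ⟨hR.le, le_rfl⟩).1 (hb01 R ⟨hR.le, le_rfl⟩).2
  have hb1 : 0 < b1 := lt_of_lt_of_le hb0 hb0le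
  set Bt : ℝ → ℝ :=
    fun r => r ^ (N - 1) * (lam * b r * |u.u r| ^ (q - 2) * u.u r + f r (u.u r)) with hBt
  set M : ℝ := R ^ (N - 1) * (lam * b1 * R ^ (q - 1) + Cf) with hM
  have hM0 : 0 ≤ M := by
    have h1 : (0:ℝ) < R ^ (q-1) := Real.rpow_pos_of_pos hR _
    have h2 : (0:ℝ) ≤ R ^ (N-1) := (pow_pos hR _).le
    have h3 : (0:ℝ) ≤ lam * b1 * R ^ (q-1) + Cf := by nlinarith [mul_pos (mul_pos hlam hb1) h1]
    rw [hM]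
    exact mul_nonneg h2 h3
  have hBt_eq : ∀ r ∈ Set.Ioo (0 : ℝ) R,
      Bt r = r ^ (N - 1) * (lam * b r * u.u r ^ (q - 1) + f r (u.u r)) := by
    intro r hr
    have h0 := hpos r hr
    have hrw : |u.u r| ^ (q - 2) * u.u r = u.u r ^ (q - 1) := by
      rw [abs_of_pos h0, show q - 1 = q - 2 + 1 by ring, Real.rpow_add h0, Real.rpow_one]
    simp only [hBt]
    rw [← hrw]; ring
  have ucontOn : ContinuousOn u.u (Set.Ioo (0 : ℝ) R) :=
    fun r hr => ((u.hasDeriv r ⟨hr.1, hr.2.le⟩).continuousAt).continuousWithinAt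
  have hfc : ContinuousOn (fun r => f r (u.u r)) (Set.Ioo (0 : ℝ) R) :=
    hF1.comp (continuousOn_id.prodMk ucontOn) (fun r hr => hmaps r hr)
  have hbc : ContinuousOn b (Set.Ioo (0 : ℝ) R) :=
    hbcont.mono (fun x hx => ⟨hx.1.le, hx.2.le⟩)
  have hrpowc : ContinuousOn (fun r => u.u r ^ (q - 1)) (Set.Ioo (0 : ℝ) R) :=
    ContinuousOn.rpow_const ucontOn (fun r hr => Or.inl (ne_of_gt (hpos r hr)))
  have hBtcont : ContinuousOn Bt (Set.Ioo (0 : ℝ) R) := by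
    apply ContinuousOn.congr
      (((continuous_pow (N - 1)).continuousOn).mul
        (((continuousOn_const.mul hbc).mul hrpowc).add hfc))
    intro r hr
    exact hBt_eq r hr
  have hBtpos : ∀ r ∈ Set.Ioo (0 : ℝ) R, 0 < Bt r := by
    intro r hr
    rw [hBt_eq r hr]
    have h0 := hpos r hr
    have h2 := hub r hr
    have hf3 := hF3 r ⟨hr.1.le, hr.2.le⟩ (u.u r) (ne_of_gt h0)
      (abs_le.mpr ⟨by linarith, by linarith [hr.1]⟩)
    have hfpos : 0 < f r (u.u r) := by
      rcases mul_pos_iff.mp hf3 with ⟨_, hh⟩ | ⟨hh, _⟩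
      · exact hh
      · linarith
    have hlb : 0 < lam * b r * u.u r ^ (q - 1) :=
      mul_pos (mul_pos hlam (lt_of_lt_of_le hb0 (hb01 r ⟨hr.1.le, hr.2.le⟩).1))
        (Real.rpow_pos_of_pos h0 _)
    exact mul_pos (pow_pos hr.1 _) (by linarith)
  have hBtbd : ∀ r ∈ Set.Ioo (0 : ℝ) R, |Bt r| ≤ M := by
    intro r hr
    rw [hBt_eq r hr]
    have h0 := hpos r hr
    have h2 := hub r hr
    have hbr := hb01 r ⟨hr.1.le, hr.2.le⟩
    have hfb : |f r (u.u r)| ≤ Cf := by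
      have := hCf (r, u.u r) (hmaps r hr)
      rwa [Real.norm_eq_abs] at this
    have hru : u.u r ^ (q - 1) ≤ R ^ (q - 1) :=
      Real.rpow_le_rpow h0.le (by linarith [hr.1]) (by linarith)
    have hrq0 : 0 < u.u r ^ (q - 1) := Real.rpow_pos_of_pos h0 _
    have hpow : r ^ (N - 1) ≤ R ^ (N - 1) := pow_le_pow_left₀ hr.1.le hr.2.le _
    have hpow0 : (0:ℝ) ≤ r ^ (N - 1) := (pow_pos hr.1 _).le
    rw [abs_mul, abs_of_nonneg hpow0]
    have habs2 : |lam * b r * u.u r ^ (q - 1) + f r (u.u r)|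
        ≤ lam * b1 * R ^ (q - 1) + Cf := by
      have hbpos : 0 < b r := lt_of_lt_of_le hb0 hbr.1
      have hterm : |lam * b r * u.u r ^ (q - 1)| ≤ lam * b1 * R ^ (q - 1) := by
        rw [abs_of_pos (mul_pos (mul_pos hlam hbpos) hrq0)]
        have h5 : b r * u.u r ^ (q - 1) ≤ b1 * R ^ (q - 1) :=
          mul_le_mul hbr.2 hru hrq0.le hb1.le
        have h6 := mul_le_mul_of_nonneg_left h5 hlam.le
        calc lam * b r * u.u r ^ (q - 1) = lam * (b r * u.u r ^ (q - 1)) := by ring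
          _ ≤ lam * (b1 * R ^ (q - 1)) := h6
          _ = lam * b1 * R ^ (q - 1) := by ring
      calc |lam * b r * u.u r ^ (q - 1) + f r (u.u r)|
          ≤ |lam * b r * u.u r ^ (q - 1)| + |f r (u.u r)| := abs_add_le _ _
        _ ≤ lam * b1 * R ^ (q - 1) + Cf := by linarith
    rw [hM]
    apply mul_le_mul hpow habs2 (abs_nonneg _) (by positivity)
  have hBm : AEStronglyMeasurable Bt (volume.restrict (Set.Ioo (0 : ℝ) R)) :=
    hBtcont.aestronglyMeasurable measurableSet_Ioo
  have hIntHelp : ∀ (g : ℝ → ℝ) (C : ℝ),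
      AEStronglyMeasurable g (volume.restrict (Set.Ioo (0 : ℝ) R)) →
      (∀ r ∈ Set.Ioo (0 : ℝ) R, |g r| ≤ C) → IntegrableOn g (Set.Ioo (0 : ℝ) R) := by
    intro g C hm hbd
    apply Integrable.mono' (g := fun _ => C)
      ((integrableOn_const_iff (C := C)).mpr (Or.inr (by rw [Real.volume_Ioo]; exact ENNReal.ofReal_lt_top)))
      hm
    exact (ae_restrict_iff' measurableSet_Ioo).mpr
      (ae_of_all _ (fun r hr => by simpa [Real.norm_eq_abs] using hbd r hr))
  have hBtint : IntegrableOn Bt (Set.Ioo (0 : ℝ) R) := hIntHelp Bt M hBm hBtbd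
  -- the weak formulation for general (not Lipschitz-1) test functions
  have hid : ∀ (vu vd : ℝ → ℝ) (c : ℝ), 0 < c → (∀ r, HasDerivAt vu (vd r) r) →
      Continuous vd → (∀ r, |vd r| ≤ c) → vu R = 0 →
      (∫ r in Set.Ioo (0:ℝ) R, r ^ (N - 1) * u.d r * vd r / Real.sqrt (1 - u.d r ^ 2))
        = ∫ r in Set.Ioo (0:ℝ) R, Bt r * vu r := by
    intro vu vd c hc hder hcont hbd hbdry
    have hci : (0:ℝ) < c⁻¹ := inv_pos.mpr hc
    set w : SpaceA N R :=
      { u := fun r => c⁻¹ * vu r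
        d := fun r => c⁻¹ * vd r
        hasDeriv := fun r _ => (hder r).const_mul c⁻¹
        sq_integrable := by
          have hcont2 : Continuous fun r : ℝ => r ^ (N - 1) * (c⁻¹ * vd r) ^ 2 := by
            fun_prop
          exact (hcont2.integrableOn_Icc).mono_set Set.Ioo_subset_Icc_self
        boundary := by simp [hbdry] } with hw
    have hwK : w.inK := by
      intro r hr
      show |c⁻¹ * vd r| ≤ 1
      rw [abs_mul, abs_of_pos hci]
      calc c⁻¹ * |vd r| ≤ c⁻¹ * c := by nlinarith [hbd r, abs_nonneg (vd r)]
        _ = 1 := inv_mul_cancel₀ hc.ne'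
    have h := huEq w hwK
    have hL : (∫ r in Set.Ioo (0:ℝ) R, r ^ (N - 1) * u.d r * w.d r / Real.sqrt (1 - u.d r ^ 2))
        = c⁻¹ * ∫ r in Set.Ioo (0:ℝ) R,
            r ^ (N - 1) * u.d r * vd r / Real.sqrt (1 - u.d r ^ 2) := by
      rw [← MeasureTheory.integral_const_mul]
      refine MeasureTheory.integral_congr_ae (Filter.Eventually.of_forall fun r => ?_)
      show r ^ (N - 1) * u.d r * (c⁻¹ * vd r) / Real.sqrt (1 - u.d r ^ 2) = _
      ring
    have hRr : (∫ r in Set.Ioo (0:ℝ) R,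
          r ^ (N - 1) * (lam * b r * |u.u r| ^ (q - 2) * u.u r + f r (u.u r)) * w.u r)
        = c⁻¹ * ∫ r in Set.Ioo (0:ℝ) R, Bt r * vu r := by
      rw [← MeasureTheory.integral_const_mul]
      refine MeasureTheory.integral_congr_ae (Filter.Eventually.of_forall fun r => ?_)
      show r ^ (N - 1) * (lam * b r * |u.u r| ^ (q - 2) * u.u r + f r (u.u r)) * (c⁻¹ * vu r) = _
      simp only [hBt]
      ring
    rw [hL, hRr] at h
    exact mul_left_cancel₀ (ne_of_gt hci) h
  -- Test function 1 : r ↦ R - r.  This yields integrability of A.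
  set A : ℝ → ℝ := fun r => r ^ (N - 1) * u.d r / Real.sqrt (1 - u.d r ^ 2) with hA
  have hv1 : ∀ r : ℝ, HasDerivAt (fun x : ℝ => R - x) (-1 : ℝ) r := by
    intro r
    simpa using (hasDerivAt_id r).const_sub R
  have hid1 : (∫ r in Set.Ioo (0:ℝ) R,
      r ^ (N - 1) * u.d r * (-1) / Real.sqrt (1 - u.d r ^ 2))
      = ∫ r in Set.Ioo (0:ℝ) R, Bt r * (R - r) :=
    hid (fun x => R - x) (fun _ => (-1:ℝ)) 1 one_pos hv1 continuous_const
      (fun r => by norm_num) (by simp)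
  have hRv_int : IntegrableOn (fun r => Bt r * (R - r)) (Set.Ioo (0:ℝ) R) := by
    have haesm : AEStronglyMeasurable (fun r : ℝ => Bt r * (R - r))
        (volume.restrict (Set.Ioo (0:ℝ) R)) :=
      hBm.mul ((continuous_const.sub continuous_id).aestronglyMeasurable.restrict)
    apply hIntHelp _ (M * R) haesm
    intro r hr
    rw [abs_mul]
    apply mul_le_mul (hBtbd r hr) _ (abs_nonneg _) hM0
    rw [abs_of_nonneg (by linarith [hr.2] : (0:ℝ) ≤ R - r)]
    linarith [hr.1]
  have hI1 : 0 < ∫ r in Set.Ioo (0:ℝ) R, Bt r * (R - r) := by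
    rw [MeasureTheory.setIntegral_pos_iff_support_of_nonneg_ae
      ((ae_restrict_iff' measurableSet_Ioo).mpr
        (ae_of_all _ fun r hr => (mul_pos (hBtpos r hr) (by linarith [hr.2])).le))
      hRv_int]
    have hsub : Set.Ioo (0:ℝ) R ⊆
        Function.support (fun r => Bt r * (R - r)) ∩ Set.Ioo 0 R :=
      fun r hr => ⟨ne_of_gt (mul_pos (hBtpos r hr) (by linarith [hr.2])), hr⟩
    calc (0:ENNReal) < volume (Set.Ioo (0:ℝ) R) := by
          rw [Real.volume_Ioo]
          exact ENNReal.ofReal_pos.mpr (by linarith)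
      _ ≤ _ := measure_mono hsub
  have hA_int : IntegrableOn A (Set.Ioo (0:ℝ) R) := by
    have hne : (∫ r in Set.Ioo (0:ℝ) R,
        r ^ (N - 1) * u.d r * (-1) / Real.sqrt (1 - u.d r ^ 2)) ≠ 0 := by
      rw [hid1]; exact ne_of_gt hI1
    have heqf : (fun r => r ^ (N - 1) * u.d r * (-1) / Real.sqrt (1 - u.d r ^ 2))
        = fun r => -A r := by
      funext r; simp only [hA]; ring
    by_contra hcon
    apply hne
    apply MeasureTheory.integral_undef
    rw [heqf]
    intro hint
    apply hcon
    have h2 : Integrable (fun r => -(-A r)) (volume.restrict (Set.Ioo (0:ℝ) R)) := hint.neg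
    have h3 : (fun r => -(-A r)) = A := by funext r; simp
    rwa [h3] at h2
  -- The primitive P of (the extension by zero of) Bt
  set Bind : ℝ → ℝ := (Set.Ioo (0:ℝ) R).indicator Bt with hBind
  have hBindInt : Integrable Bind volume := hBtint.integrable_indicator measurableSet_Ioo
  have hBindbd : ∀ r, |Bind r| ≤ M := by
    intro r
    by_cases hr : r ∈ Set.Ioo (0:ℝ) R
    · simp only [hBind, Set.indicator_of_mem hr]
      exact hBtbd r hr
    · simp only [hBind, Set.indicator_of_notMem hr, abs_zero]
      exact hM0
  set P : ℝ → ℝ := fun x => ∫ t in (0:ℝ)..x, Bind t with hP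
  have hPcont : Continuous P :=
    intervalIntegral.continuous_primitive (fun a b => hBindInt.intervalIntegrable) 0
  have hPderiv : ∀ x ∈ Set.Ioo (0:ℝ) R, HasDerivAt P (Bind x) x := by
    intro x hx
    have hca : ContinuousAt Bind x := by
      have h1 : ContinuousAt Bt x := hBtcont.continuousAt (isOpen_Ioo.mem_nhds hx)
      apply h1.congr
      filter_upwards [isOpen_Ioo.mem_nhds hx] with y hy
      exact (Set.indicator_of_mem hy _).symm
    exact intervalIntegral.integral_hasDerivAt_right hBindInt.intervalIntegrable
      ⟨Set.univ, Filter.univ_mem, hBindInt.aestronglyMeasurable.restrict⟩ hca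
  have hPpos : ∀ x ∈ Set.Ioc (0:ℝ) R, 0 < P x := by
    intro x hx
    apply intervalIntegral.intervalIntegral_pos_of_pos_on hBindInt.intervalIntegrable _ hx.1
    intro t ht
    have htm : t ∈ Set.Ioo (0:ℝ) R := ⟨ht.1, lt_of_lt_of_le ht.2 hx.2⟩
    simp only [hBind, Set.indicator_of_mem htm]
    exact hBtpos t htm
  have hP_intOn : IntegrableOn P (Set.Ioo (0:ℝ) R) :=
    (hPcont.integrableOn_Icc).mono_set Set.Ioo_subset_Icc_self
  -- A + P = 0 a.e. on (0,R)
  have hAP : ∀ᵐ r ∂(volume.restrict (Set.Ioo (0:ℝ) R)), A r + P r = 0 := by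
    have hint : Integrable (fun r => A r + P r) (volume.restrict (Set.Ioo (0:ℝ) R)) :=
      hA_int.add hP_intOn
    apply ae_eq_zero_of_integral_contDiff_smul_eq_zero (f := fun r => A r + P r)
      hint.locallyIntegrable
    intro g hg hgsupp
    obtain ⟨cg, hcg⟩ := hgsupp.exists_bound_of_continuous hg.continuous
    have hcg0 : 0 ≤ cg := le_trans (norm_nonneg _) (hcg 0)
    set v : ℝ → ℝ := fun r => -∫ t in R..r, g t with hv
    have hvder : ∀ r, HasDerivAt v (-g r) r := by
      intro r
      exact (intervalIntegral.integral_hasDerivAt_right (hg.continuous.intervalIntegrable R r)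
        ⟨Set.univ, Filter.univ_mem, hg.continuous.aestronglyMeasurable.restrict⟩
        hg.continuous.continuousAt).neg
    have hvcont : Continuous v :=
      (intervalIntegral.continuous_primitive
        (fun a b => hg.continuous.intervalIntegrable a b) R).neg
    have hvR : v R = 0 := by simp [hv]
    have hid2 : (∫ r in Set.Ioo (0:ℝ) R,
        r ^ (N - 1) * u.d r * (-g r) / Real.sqrt (1 - u.d r ^ 2))
        = ∫ r in Set.Ioo (0:ℝ) R, Bt r * v r :=
      hid v (fun r => -g r) (cg + 1) (by linarith) hvder hg.continuous.neg
        (fun r => by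
          rw [abs_neg]
          have := hcg r
          rw [Real.norm_eq_abs] at this
          linarith) hvR
    have hid2' : (∫ r in Set.Ioo (0:ℝ) R, -(g r * A r))
        = ∫ r in Set.Ioo (0:ℝ) R, Bt r * v r := by
      refine Eq.trans ?_ hid2
      refine MeasureTheory.integral_congr_ae (Filter.Eventually.of_forall fun r => ?_)
      simp only [hA]
      ring
    rw [MeasureTheory.integral_neg] at hid2'
    -- integration by parts on [0,R]
    have hPint0 : P 0 = 0 := by simp [hP]
    have hBv_int : IntervalIntegrable (fun x => Bind x * v x) volume 0 R := by
      rw [intervalIntegrable_iff_integrableOn_Ioc_of_le hR.le]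
      obtain ⟨Cv, hCv⟩ :=
        isCompact_Icc.exists_bound_of_continuousOn
          (hvcont.continuousOn : ContinuousOn v (Set.Icc (0:ℝ) R))
      have haesm2 : AEStronglyMeasurable (fun x : ℝ => Bind x * v x)
          (volume.restrict (Set.Ioc (0:ℝ) R)) :=
        (hBindInt.aestronglyMeasurable.restrict).mul (hvcont.aestronglyMeasurable.restrict)
      apply Integrable.mono' (g := fun _ => M * Cv)
        ((integrableOn_const_iff (C := M * Cv)).mpr (Or.inr measure_Ioc_lt_top))
        haesm2
      refine (ae_restrict_iff' measurableSet_Ioc).mpr (ae_of_all _ fun x hx => ?_)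
      rw [Real.norm_eq_abs, abs_mul]
      have h2 := hCv x ⟨hx.1.le, hx.2⟩
      rw [Real.norm_eq_abs] at h2
      exact mul_le_mul (hBindbd x) h2 (abs_nonneg _) hM0
    have hPg_int : IntervalIntegrable (fun x => P x * -g x) volume 0 R :=
      (hPcont.mul hg.continuous.neg).intervalIntegrable 0 R
    have hFTC : (∫ y in (0:ℝ)..R, (Bind y * v y + P y * -g y)) = P R * v R - P 0 * v 0 := by
      apply intervalIntegral.integral_eq_sub_of_hasDeriv_right_of_le hR.le
        ((hPcont.mul hvcont).continuousOn)
        (fun x hx => ((hPderiv x hx).mul (hvder x)).hasDerivWithinAt)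
        (hBv_int.add hPg_int)
    rw [hvR, hPint0, mul_zero, zero_mul, sub_zero] at hFTC
    rw [intervalIntegral.integral_add hBv_int hPg_int] at hFTC
    have hc1 : (∫ y in (0:ℝ)..R, Bind y * v y) = ∫ r in Set.Ioo (0:ℝ) R, Bt r * v r := by
      rw [intervalIntegral.integral_of_le hR.le, MeasureTheory.integral_Ioc_eq_integral_Ioo]
      refine MeasureTheory.setIntegral_congr_fun measurableSet_Ioo (fun x hx => ?_)
      simp only [hBind, Set.indicator_of_mem hx]
    have hc2 : (∫ y in (0:ℝ)..R, P y * -g y) = -∫ r in Set.Ioo (0:ℝ) R, g r * P r := by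
      rw [intervalIntegral.integral_of_le hR.le, MeasureTheory.integral_Ioc_eq_integral_Ioo,
        ← MeasureTheory.integral_neg]
      exact MeasureTheory.integral_congr_ae (Filter.Eventually.of_forall fun x => by ring)
    rw [hc1, hc2] at hFTC
    have hgA_int : Integrable (fun x => g x * A x) (volume.restrict (Set.Ioo (0:ℝ) R)) :=
      hA_int.bdd_mul hg.continuous.aestronglyMeasurable (ae_of_all _ hcg)
    have hgP_int : Integrable (fun x => g x * P x) (volume.restrict (Set.Ioo (0:ℝ) R)) :=
      hP_intOn.bdd_mul hg.continuous.aestronglyMeasurable (ae_of_all _ hcg)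
    show (∫ x in Set.Ioo (0:ℝ) R, g x • (A x + P x)) = 0
    rw [show (∫ x in Set.Ioo (0:ℝ) R, g x • (A x + P x))
        = ∫ x in Set.Ioo (0:ℝ) R, (g x * A x + g x * P x) from
      MeasureTheory.integral_congr_ae (Filter.Eventually.of_forall
        (fun x => by simp only [smul_eq_mul]; ring))]
    rw [MeasureTheory.integral_add hgA_int hgP_int]
    linarith [hid2', hFTC]
  -- identify the derivative a.e.
  set z : ℝ → ℝ := fun s => -P s / s ^ (N - 1) with hz
  set ρ : ℝ → ℝ := fun s => z s / Real.sqrt (1 + z s ^ 2) with hρ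
  have hdae : ∀ᵐ x ∂(volume.restrict (Set.Ioo (0:ℝ) R)), u.d x = ρ x := by
    filter_upwards [hAP, MeasureTheory.ae_restrict_mem measurableSet_Ioo] with r h1' h2
    have h1 : A r + P r = 0 := h1'
    have hrp : (0:ℝ) < r ^ (N - 1) := pow_pos h2.1 _
    have hPr : 0 < P r := hPpos r ⟨h2.1, h2.2.le⟩
    have hzr : z r < 0 := by
      simp only [hz]
      exact div_neg_of_neg_of_pos (by linarith) hrp
    have hdz : u.d r / Real.sqrt (1 - u.d r ^ 2) = z r := by
      have hAr : A r = -P r := by linarith [h1]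
      simp only [hA] at hAr
      simp only [hz]
      rw [eq_div_iff (ne_of_gt hrp)]
      have hre : u.d r / Real.sqrt (1 - u.d r ^ 2) * r ^ (N - 1)
          = r ^ (N - 1) * u.d r / Real.sqrt (1 - u.d r ^ 2) := by ring
      rw [hre, hAr]
    simp only [hρ]
    exact solve_d_aux (huK r h2) hzr hdz
  have hzcont : ContinuousOn z (Set.Ioi (0:ℝ)) := by
    simp only [hz]
    exact (hPcont.neg.continuousOn).div ((continuous_pow (N - 1)).continuousOn)
      (fun s hs => ne_of_gt (pow_pos hs _))
  have hsqz : ∀ s : ℝ, 0 < Real.sqrt (1 + z s ^ 2) :=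
    fun s => Real.sqrt_pos.mpr (by positivity)
  have hρcont : ContinuousOn ρ (Set.Ioi (0:ℝ)) := by
    simp only [hρ]
    exact hzcont.div
      (Real.continuous_sqrt.comp_continuousOn (continuousOn_const.add (hzcont.pow 2)))
      (fun s hs => ne_of_gt (hsqz s))
  have hρneg : ∀ s ∈ Set.Ioc (0:ℝ) R, ρ s < 0 := by
    intro s hs
    have hzs : z s < 0 := by
      simp only [hz]
      exact div_neg_of_neg_of_pos (by linarith [hPpos s hs]) (pow_pos hs.1 _)
    simp only [hρ]
    exact div_neg_of_neg_of_pos hzs (hsqz s)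
  set G : ℝ → ℝ := fun x => ∫ t in R..x, ρ t with hG
  have hGder : ∀ x : ℝ, 0 < x → HasDerivAt G (ρ x) x := by
    intro x hx
    have hsub : Set.uIcc R x ⊆ Set.Ioi (0:ℝ) :=
      fun y hy => lt_of_lt_of_le (lt_min hR hx) hy.1
    exact intervalIntegral.integral_hasDerivAt_right
      ((hρcont.mono hsub).intervalIntegrable)
      ⟨Set.Ioi 0, Ioi_mem_nhds hx, hρcont.aestronglyMeasurable measurableSet_Ioi⟩
      (hρcont.continuousAt (Ioi_mem_nhds hx))
  have hne_ae : ∀ᵐ x : ℝ ∂volume, x ≠ R := by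
    rw [MeasureTheory.ae_iff]
    have h0 : volume ({R} : Set ℝ) = 0 := Real.volume_singleton
    refine MeasureTheory.measure_mono_null (fun x hx => ?_) h0
    simp only [Set.mem_setOf_eq, not_not] at hx
    simp [hx]
  have hdρ_all : ∀ᵐ x : ℝ ∂volume, x ∈ Set.Ioo (0:ℝ) R → u.d x = ρ x :=
    (ae_restrict_iff' measurableSet_Ioo).mp hdae
  have hug : ∀ a ∈ Set.Ioc (0:ℝ) R, u.u a = G a := by
    intro a ha
    rcases eq_or_lt_of_le ha.2 with haR | haR
    · rw [haR, u.boundary]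
      simp [hG]
    · have hsub2 : Set.uIcc a R ⊆ Set.Ioi (0:ℝ) := by
        rw [Set.uIcc_of_le haR.le]
        exact fun y hy => lt_of_lt_of_le ha.1 hy.1
      have hρint : IntervalIntegrable ρ volume a R := (hρcont.mono hsub2).intervalIntegrable
      have haeIoc : ∀ᵐ x : ℝ ∂volume, x ∈ Set.uIoc a R → u.d x = ρ x := by
        filter_upwards [hdρ_all, hne_ae] with x h1 h2 hx
        rw [Set.uIoc_of_le haR.le] at hx
        exact h1 ⟨lt_trans ha.1 hx.1, lt_of_le_of_ne hx.2 h2⟩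
      have hdint : IntervalIntegrable u.d volume a R := by
        rw [intervalIntegrable_iff_integrableOn_Ioc_of_le haR.le]
        rw [intervalIntegrable_iff_integrableOn_Ioc_of_le haR.le] at hρint
        apply hρint.congr
        filter_upwards [MeasureTheory.ae_restrict_of_ae haeIoc,
          MeasureTheory.ae_restrict_mem measurableSet_Ioc] with x h1 h2
        exact (h1 (by rw [Set.uIoc_of_le haR.le]; exact h2)).symm
      have hFTC2 : ∫ y in a..R, u.d y = u.u R - u.u a := by
        apply intervalIntegral.integral_eq_sub_of_hasDerivAt _ hdint
        intro x hx
        rw [Set.uIcc_of_le haR.le] at hx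
        exact u.hasDeriv x ⟨lt_of_lt_of_le ha.1 hx.1, hx.2⟩
      have hcong : ∫ y in a..R, u.d y = ∫ y in a..R, ρ y :=
        intervalIntegral.integral_congr_ae haeIoc
      rw [u.boundary] at hFTC2
      have hGa : G a = -∫ y in a..R, ρ y := by
        simp only [hG]
        rw [← intervalIntegral.integral_symm]
      rw [hGa, ← hcong]
      linarith [hFTC2]
  intro r₀ hr₀
  have hmem : Set.Ioc (0:ℝ) R ∈ nhdsWithin r₀ (Set.Iic R) := by
    rw [mem_nhdsWithin]
    exact ⟨Set.Ioi 0, isOpen_Ioi, hr₀.1, fun x hx => ⟨hx.1, hx.2⟩⟩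
  have h1 : HasDerivWithinAt u.u (u.d r₀) (Set.Iic R) r₀ :=
    (u.hasDeriv r₀ hr₀).hasDerivWithinAt
  have h2 : HasDerivWithinAt u.u (ρ r₀) (Set.Iic R) r₀ := by
    have hGd : HasDerivWithinAt G (ρ r₀) (Set.Iic R) r₀ := (hGder r₀ hr₀.1).hasDerivWithinAt
    exact hGd.congr_of_eventuallyEq
      (Filter.eventually_of_mem hmem (fun x hx => hug x hx)) (hug r₀ hr₀)
  have huniq : UniqueDiffWithinAt ℝ (Set.Iic R) r₀ := by
    apply uniqueDiffWithinAt_convex (convex_Iic R)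
    · rw [interior_Iic]
      exact ⟨R - 1, by simp⟩
    · rw [closure_Iic]
      exact hr₀.2
  have heq : u.d r₀ = ρ r₀ := by
    rw [← h1.derivWithin huniq, ← h2.derivWithin huniq]
  rw [heq]
  exact hρneg r₀ hr₀

end AuxiliaryMonotonicity
/-- Monotonicity of the nontrivial one-signed solutions: a positive solution has `u' < 0`
on `(0,R]` and a negative solution has `u' > 0` on `(0,R]`. -/
theorem solution_monotonicity
    (N : ℕ) (hN : 3 ≤ N) (R : ℝ) (hR : 0 < R) (q lam : ℝ) (hq1 : 1 < q) (hq2 : q < 2)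
    (hlam : 0 < lam) (f : ℝ → ℝ → ℝ) (b : ℝ → ℝ)
    (hF1 : hypF1 R f) (hF2 : hypF2 R f) (hF3 : hypF3 R f) (hB : hypB R b)
    (u : SpaceA N R) (hu : isWeakSol q lam b f u) :
    (u.isPos → ∀ r ∈ Set.Ioc (0 : ℝ) R, u.d r < 0) ∧
    (u.isNeg → ∀ r ∈ Set.Ioc (0 : ℝ) R, 0 < u.d r) := by
  constructor
  · intro hpos
    exact key_pos N R hR q lam hq1 hlam f b hF1 hF3 hB u hu hpos
  · intro hneg
    set f' : ℝ → ℝ → ℝ := fun r s => -f r (-s) with hf'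
    set u' : SpaceA N R :=
      { u := fun r => -u.u r
        d := fun r => -u.d r
        hasDeriv := fun r hr => (u.hasDeriv r hr).neg
        sq_integrable := by
          have heq : (fun r : ℝ => r ^ (N - 1) * (-u.d r) ^ 2)
              = fun r : ℝ => r ^ (N - 1) * u.d r ^ 2 := by
            funext r; rw [neg_sq]
          rw [heq]
          exact u.sq_integrable
        boundary := by simp [u.boundary] } with hu'
    have hu'K : u'.inK := by
      intro r hr
      show |-u.d r| ≤ 1
      rw [abs_neg]
      exact hu.1 r hr
    have hWS : isWeakSol q lam b f' u' := by
      refine ⟨hu'K, fun φ hφ => ?_⟩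
      have h := hu.2 φ hφ
      have hL : (∫ r in Set.Ioo (0:ℝ) R,
          r ^ (N - 1) * u'.d r * φ.d r / Real.sqrt (1 - u'.d r ^ 2))
          = -∫ r in Set.Ioo (0:ℝ) R,
              r ^ (N - 1) * u.d r * φ.d r / Real.sqrt (1 - u.d r ^ 2) := by
        rw [← MeasureTheory.integral_neg]
        refine MeasureTheory.integral_congr_ae (Filter.Eventually.of_forall fun r => ?_)
        show r ^ (N - 1) * (-u.d r) * φ.d r / Real.sqrt (1 - (-u.d r) ^ 2) = _
        rw [neg_sq]
        ring
      have hRr : (∫ r in Set.Ioo (0:ℝ) R,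
          r ^ (N - 1) * (lam * b r * |u'.u r| ^ (q - 2) * u'.u r + f' r (u'.u r)) * φ.u r)
          = -∫ r in Set.Ioo (0:ℝ) R,
              r ^ (N - 1) * (lam * b r * |u.u r| ^ (q - 2) * u.u r + f r (u.u r)) * φ.u r := by
        rw [← MeasureTheory.integral_neg]
        refine MeasureTheory.integral_congr_ae (Filter.Eventually.of_forall fun r => ?_)
        show r ^ (N - 1) * (lam * b r * |-u.u r| ^ (q - 2) * (-u.u r)
            + (fun r s => -f r (-s)) r (-u.u r)) * φ.u r = _
        simp only [abs_neg, neg_neg]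
        ring
      rw [hL, hRr, h]
    have hF1' : hypF1 R f' := by
      have hcomp : ContinuousOn ((fun p : ℝ × ℝ => f p.1 p.2) ∘ fun p : ℝ × ℝ => (p.1, -p.2))
          (Set.Icc 0 R ×ˢ Set.Icc (-R) R) := by
        apply hF1.comp ((continuous_fst.prodMk continuous_snd.neg).continuousOn)
        intro p hp
        refine ⟨hp.1, ?_⟩
        simp only [Set.mem_Icc, Pi.neg_apply]
        constructor <;> linarith [hp.2.1, hp.2.2]
      exact hcomp.neg
    have hF3' : hypF3 R f' := by
      intro r hr s hs hsR
      have := hF3 r hr (-s) (neg_ne_zero.mpr hs) (by rwa [abs_neg])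
      show 0 < s * -f r (-s)
      nlinarith [this]
    have hpos' : u'.isPos := fun r hr => neg_pos.mpr (hneg r hr)
    intro r hr
    have hkey := key_pos N R hR q lam hq1 hlam f' b hF1' hF3' hB u' hWS hpos' r hr
    have : -u.d r < 0 := hkey
    linarith
end
end

section
/- Let N ≥ 3 be an integer, R > 0, 1 < q < 2, λ > 0; suppose f satisfies (F1)–(F3) and b satisfies (B). If u ∈ 𝒜 is a critical point (in the sense of Szulkin) of the functional I_λ^± = Ψ + F_λ^±, then ∫₀^R r^{N-1}|u'|²/√(1−|u'|²) dr < +∞ and ∫₀^R r^{N-1}|u'|/√(1−|u'|²) dr < +∞; in particular the set E = {r ∈ (0,R) : |u'(r)| = 1} has Lebesgue measure zero. -/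
open MeasureTheory Set Filter
open scoped Classical

noncomputable section

variable {N : ℕ} {R : ℝ}

section AuxiliaryLemmas

variable {N : ℕ} {R : ℝ}

/-- Scaling of an element of `𝒜`. -/
def SpaceA.scale (t : ℝ) (w : SpaceA N R) : SpaceA N R where
  u := fun r => t * w.u r
  d := fun r => t * w.d r
  hasDeriv := fun r hr => (w.hasDeriv r hr).const_mul t
  sq_integrable := by
    have h : (fun r : ℝ => r ^ (N - 1) * (t * w.d r) ^ 2)
        = fun r : ℝ => t ^ 2 * (r ^ (N - 1) * w.d r ^ 2) := by funext r; ring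
    unfold MeasureTheory.IntegrableOn
    rw [h]
    exact w.sq_integrable.const_mul (t ^ 2)
  boundary := by simp [w.boundary]

lemma SpaceA.scale_inK {t : ℝ} (ht0 : 0 ≤ t) (ht1 : t ≤ 1) {w : SpaceA N R} (hw : w.inK) :
    (SpaceA.scale t w).inK := by
  intro r hr
  have h := hw r hr
  show |t * w.d r| ≤ 1
  rw [abs_mul, abs_of_nonneg ht0]
  nlinarith [abs_nonneg (w.d r)]

lemma SpaceA.aemeasurable_d (w : SpaceA N R) :
    AEMeasurable w.d (volume.restrict (Ioo (0:ℝ) R)) := by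
  have h : ∀ᵐ r ∂(volume.restrict (Ioo (0:ℝ) R)), deriv w.u r = w.d r := by
    filter_upwards [ae_restrict_mem measurableSet_Ioo] with r hr
    exact (w.hasDeriv r ⟨hr.1, hr.2.le⟩).deriv
  exact (measurable_deriv w.u).aemeasurable.congr h

lemma integrableOn_Ioo_of_bounded {g : ℝ → ℝ} {R C : ℝ}
    (hg : AEMeasurable g (volume.restrict (Ioo (0:ℝ) R)))
    (hC : ∀ r ∈ Ioo (0:ℝ) R, |g r| ≤ C) : IntegrableOn g (Ioo 0 R) := by
  haveI : IsFiniteMeasure (volume.restrict (Ioo (0:ℝ) R)) :=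
    ⟨by rw [Measure.restrict_apply_univ]; exact measure_Ioo_lt_top⟩
  refine ⟨hg.aestronglyMeasurable, HasFiniteIntegral.of_bounded (C := C) ?_⟩
  filter_upwards [ae_restrict_mem measurableSet_Ioo] with r hr
  simpa [Real.norm_eq_abs] using hC r hr

lemma abs_le_aux {s : ℝ} (hs : |s| ≤ 1) : |s| ≤ 2 * s ^ 2 + 2 * Real.sqrt (1 - s ^ 2) := by
  have hσ0 : 0 ≤ Real.sqrt (1 - s ^ 2) := Real.sqrt_nonneg _
  have hs2 : s ^ 2 ≤ 1 := by nlinarith [sq_abs s, abs_nonneg s]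
  have hσ2 : Real.sqrt (1 - s ^ 2) ^ 2 = 1 - s ^ 2 := Real.sq_sqrt (by linarith)
  rcases le_or_gt (1/2 : ℝ) |s| with h | h
  · nlinarith [sq_abs s, mul_nonneg (abs_nonneg s) (show (0:ℝ) ≤ 2 * |s| - 1 by linarith)]
  · nlinarith [sq_abs s, abs_nonneg s]

lemma sqrt_diff_lower {s t : ℝ} (hs : s ^ 2 ≤ 1) (ht0 : 0 ≤ t) (ht1 : t < 1) :
    (1 - t ^ 2) * s ^ 2 / (2 * Real.sqrt (1 - t ^ 2 * s ^ 2))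
      ≤ Real.sqrt (1 - t ^ 2 * s ^ 2) - Real.sqrt (1 - s ^ 2) := by
  have hs0 : 0 ≤ s ^ 2 := sq_nonneg s
  have ht2 : t ^ 2 < 1 := by nlinarith
  have ha : 0 < 1 - t ^ 2 * s ^ 2 := by nlinarith
  have hb : 0 ≤ 1 - s ^ 2 := by linarith
  have hsa0 : 0 < Real.sqrt (1 - t ^ 2 * s ^ 2) := Real.sqrt_pos.2 ha
  have hsb0 : 0 ≤ Real.sqrt (1 - s ^ 2) := Real.sqrt_nonneg _
  have hsa2 : Real.sqrt (1 - t ^ 2 * s ^ 2) ^ 2 = 1 - t ^ 2 * s ^ 2 := Real.sq_sqrt ha.le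
  have hsb2 : Real.sqrt (1 - s ^ 2) ^ 2 = 1 - s ^ 2 := Real.sq_sqrt hb
  have hba : Real.sqrt (1 - s ^ 2) ≤ Real.sqrt (1 - t ^ 2 * s ^ 2) :=
    Real.sqrt_le_sqrt (by nlinarith)
  rw [div_le_iff₀ (by positivity)]
  nlinarith [sq_nonneg (Real.sqrt (1 - t ^ 2 * s ^ 2) - Real.sqrt (1 - s ^ 2))]

lemma integrableOn_f3 (u : SpaceA N R) (hK : u.inK) {t : ℝ} (ht0 : 0 ≤ t) (ht1 : t < 1) :
    IntegrableOn
      (fun r : ℝ => r ^ (N - 1) * u.d r ^ 2 / Real.sqrt (1 - t ^ 2 * u.d r ^ 2)) (Ioo 0 R) := by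
  have hd := u.aemeasurable_d
  have ht2 : t ^ 2 < 1 := by nlinarith
  have hs0 : 0 < Real.sqrt (1 - t ^ 2) := Real.sqrt_pos.2 (by linarith)
  apply integrableOn_Ioo_of_bounded (C := (max 1 R) ^ (N - 1) / Real.sqrt (1 - t ^ 2))
  · exact ((measurable_id.pow_const _).aemeasurable.mul (hd.pow_const 2)).div
      (Real.continuous_sqrt.measurable.comp_aemeasurable
        (aemeasurable_const.sub ((hd.pow_const 2).const_mul (t ^ 2))))
  · intro r hr
    have hd2 : u.d r ^ 2 ≤ 1 := by nlinarith [hK r hr, abs_nonneg (u.d r), sq_abs (u.d r)]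
    have hp0 : 0 ≤ r ^ (N - 1) := pow_nonneg hr.1.le _
    have hpC : r ^ (N - 1) ≤ (max 1 R) ^ (N - 1) :=
      pow_le_pow_left₀ hr.1.le (hr.2.le.trans (le_max_right 1 R)) _
    have hden : Real.sqrt (1 - t ^ 2) ≤ Real.sqrt (1 - t ^ 2 * u.d r ^ 2) :=
      Real.sqrt_le_sqrt (by nlinarith [sq_nonneg t])
    rw [abs_of_nonneg (div_nonneg (mul_nonneg hp0 (sq_nonneg _)) (Real.sqrt_nonneg _))]
    refine div_le_div₀ (by positivity) ?_ hs0 hden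
    calc r ^ (N - 1) * u.d r ^ 2 ≤ (max 1 R) ^ (N - 1) * 1 :=
          mul_le_mul hpC hd2 (sq_nonneg _) (by positivity)
      _ = (max 1 R) ^ (N - 1) := mul_one _

lemma psi_scale_lower (u : SpaceA N R) (hK : u.inK) {t : ℝ} (ht0 : 0 ≤ t) (ht1 : t < 1) :
    (1 - t ^ 2) / 2 *
        (∫ r in Ioo (0:ℝ) R, r ^ (N - 1) * u.d r ^ 2 / Real.sqrt (1 - t ^ 2 * u.d r ^ 2))
      ≤ u.PsiR - (SpaceA.scale t u).PsiR := by
  have hd := u.aemeasurable_d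
  have hd2le : ∀ r ∈ Ioo (0:ℝ) R, u.d r ^ 2 ≤ 1 := fun r hr => by
    nlinarith [hK r hr, abs_nonneg (u.d r), sq_abs (u.d r)]
  have hC0 : (0:ℝ) < (max 1 R) ^ (N - 1) :=
    pow_pos (lt_of_lt_of_le one_pos (le_max_left 1 R)) _
  have hrC : ∀ r ∈ Ioo (0:ℝ) R, 0 ≤ r ^ (N - 1) ∧ r ^ (N - 1) ≤ (max 1 R) ^ (N - 1) :=
    fun r hr => ⟨pow_nonneg hr.1.le _,
      pow_le_pow_left₀ hr.1.le (hr.2.le.trans (le_max_right 1 R)) _⟩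
  have hint3 : IntegrableOn
      (fun r : ℝ => r ^ (N - 1) * u.d r ^ 2 / Real.sqrt (1 - t ^ 2 * u.d r ^ 2)) (Ioo 0 R) :=
    integrableOn_f3 u hK ht0 ht1
  have hint1 : IntegrableOn
      (fun r : ℝ => r ^ (N - 1) * (1 - Real.sqrt (1 - u.d r ^ 2))) (Ioo 0 R) := by
    apply integrableOn_Ioo_of_bounded (C := (max 1 R) ^ (N - 1))
    · exact (measurable_id.pow_const _).aemeasurable.mul (aemeasurable_const.sub
        (Real.continuous_sqrt.measurable.comp_aemeasurable
          (aemeasurable_const.sub (hd.pow_const 2))))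
    · intro r hr
      obtain ⟨h0, h1⟩ := hrC r hr
      have hs := hd2le r hr
      have hsq0 : 0 ≤ Real.sqrt (1 - u.d r ^ 2) := Real.sqrt_nonneg _
      have hsq1 : Real.sqrt (1 - u.d r ^ 2) ≤ 1 := Real.sqrt_le_one.mpr (by nlinarith [sq_nonneg (u.d r)])
      rw [abs_of_nonneg (mul_nonneg h0 (by linarith))]
      nlinarith
  have hint2 : IntegrableOn
      (fun r : ℝ => r ^ (N - 1) * (1 - Real.sqrt (1 - (t * u.d r) ^ 2))) (Ioo 0 R) := by
    apply integrableOn_Ioo_of_bounded (C := (max 1 R) ^ (N - 1))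
    · exact (measurable_id.pow_const _).aemeasurable.mul (aemeasurable_const.sub
        (Real.continuous_sqrt.measurable.comp_aemeasurable
          (aemeasurable_const.sub ((hd.const_mul t).pow_const 2))))
    · intro r hr
      obtain ⟨h0, h1⟩ := hrC r hr
      have hs := hd2le r hr
      have hs' : (t * u.d r) ^ 2 ≤ 1 := by nlinarith [sq_nonneg (u.d r), sq_nonneg t]
      have hsq0 : 0 ≤ Real.sqrt (1 - (t * u.d r) ^ 2) := Real.sqrt_nonneg _
      have hsq1 : Real.sqrt (1 - (t * u.d r) ^ 2) ≤ 1 :=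
        Real.sqrt_le_one.mpr (by nlinarith [sq_nonneg (t * u.d r)])
      rw [abs_of_nonneg (mul_nonneg h0 (by linarith))]
      nlinarith
  have hPsi1 : u.PsiR = ∫ r in Ioo (0:ℝ) R, r ^ (N - 1) * (1 - Real.sqrt (1 - u.d r ^ 2)) := rfl
  have hPsi2 : (SpaceA.scale t u).PsiR
      = ∫ r in Ioo (0:ℝ) R, r ^ (N - 1) * (1 - Real.sqrt (1 - (t * u.d r) ^ 2)) := rfl
  rw [hPsi1, hPsi2, ← integral_sub hint1 hint2, ← integral_const_mul]
  apply setIntegral_mono_on (hint3.const_mul _) (hint1.sub hint2) measurableSet_Ioo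
  intro r hr
  have hs2 := hd2le r hr
  have hp := (hrC r hr).1
  have hkey := sqrt_diff_lower hs2 ht0 ht1
  have hsa : (0:ℝ) < Real.sqrt (1 - t ^ 2 * u.d r ^ 2) :=
    Real.sqrt_pos.2 (by nlinarith [sq_nonneg (u.d r), sq_nonneg t])
  have htd : (t * u.d r) ^ 2 = t ^ 2 * u.d r ^ 2 := by ring
  have e1 : (1 - t ^ 2) / 2 * (r ^ (N - 1) * u.d r ^ 2 / Real.sqrt (1 - t ^ 2 * u.d r ^ 2))
      = r ^ (N - 1) * ((1 - t ^ 2) * u.d r ^ 2 / (2 * Real.sqrt (1 - t ^ 2 * u.d r ^ 2))) := by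
    field_simp
  have h2 := mul_le_mul_of_nonneg_left hkey hp
  have e2 : r ^ (N - 1) * (1 - Real.sqrt (1 - u.d r ^ 2))
        - r ^ (N - 1) * (1 - Real.sqrt (1 - (t * u.d r) ^ 2))
      = r ^ (N - 1) * (Real.sqrt (1 - t ^ 2 * u.d r ^ 2) - Real.sqrt (1 - u.d r ^ 2)) := by
    rw [htd]; ring
  simp only [Pi.sub_apply]
  rw [e1, e2]
  exact h2

lemma FDplus_smul (q lam : ℝ) (b : ℝ → ℝ) (f : ℝ → ℝ → ℝ) (w : SpaceA N R) (c : ℝ)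
    (z : ℝ → ℝ) :
    FDplus q lam b f w (fun r => c * z r) = c * FDplus q lam b f w z := by
  have h1 : (∫ r in Ioo (0:ℝ) R,
        r ^ (N - 1) * b r * |max (w.u r) 0| ^ (q - 2) * max (w.u r) 0 * (c * z r))
      = c * ∫ r in Ioo (0:ℝ) R,
        r ^ (N - 1) * b r * |max (w.u r) 0| ^ (q - 2) * max (w.u r) 0 * z r := by
    rw [← integral_const_mul]; congr 1; funext r; ring
  have h2 : (∫ r in Ioo (0:ℝ) R, r ^ (N - 1) * fplus R f r (w.u r) * (c * z r))
      = c * ∫ r in Ioo (0:ℝ) R, r ^ (N - 1) * fplus R f r (w.u r) * z r := by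
    rw [← integral_const_mul]; congr 1; funext r; ring
  simp only [FDplus]
  rw [h1, h2]; ring

lemma FDminus_smul (q lam : ℝ) (b : ℝ → ℝ) (f : ℝ → ℝ → ℝ) (w : SpaceA N R) (c : ℝ)
    (z : ℝ → ℝ) :
    FDminus q lam b f w (fun r => c * z r) = c * FDminus q lam b f w z := by
  have h1 : (∫ r in Ioo (0:ℝ) R,
        r ^ (N - 1) * b r * |max (-w.u r) 0| ^ (q - 2) * max (-w.u r) 0 * (c * z r))
      = c * ∫ r in Ioo (0:ℝ) R,
        r ^ (N - 1) * b r * |max (-w.u r) 0| ^ (q - 2) * max (-w.u r) 0 * z r := by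
    rw [← integral_const_mul]; congr 1; funext r; ring
  have h2 : (∫ r in Ioo (0:ℝ) R, r ^ (N - 1) * fminus R f r (w.u r) * (c * z r))
      = c * ∫ r in Ioo (0:ℝ) R, r ^ (N - 1) * fminus R f r (w.u r) * z r := by
    rw [← integral_const_mul]; congr 1; funext r; ring
  simp only [FDminus]
  rw [h1, h2]; ring

end AuxiliaryLemmas

/-- Finiteness of the weighted integrals at Szulkin critical points of `I_λ^±`; in particular
the set where `|u'| = 1` is Lebesgue-null. -/
theorem critical_point_integrability
    (N : ℕ) (hN : 3 ≤ N) (R : ℝ) (hR : 0 < R) (q lam : ℝ) (hq1 : 1 < q) (hq2 : q < 2)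
    (hlam : 0 < lam) (f : ℝ → ℝ → ℝ) (b : ℝ → ℝ)
    (hF1 : hypF1 R f) (hF2 : hypF2 R f) (hF3 : hypF3 R f) (hB : hypB R b)
    (u : SpaceA N R) (hu : isCritPlus q lam b f u ∨ isCritMinus q lam b f u) :
    MeasureTheory.IntegrableOn
      (fun r : ℝ => r ^ (N - 1) * u.d r ^ 2 / Real.sqrt (1 - u.d r ^ 2)) (Set.Ioo 0 R) ∧
    MeasureTheory.IntegrableOn
      (fun r : ℝ => r ^ (N - 1) * |u.d r| / Real.sqrt (1 - u.d r ^ 2)) (Set.Ioo 0 R) ∧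
    volume {r : ℝ | r ∈ Set.Ioo (0 : ℝ) R ∧ |u.d r| = 1} = 0 := by
  have huK : u.inK := by rcases hu with h | h; exacts [h.1, h.1]
  have hd : AEMeasurable u.d (volume.restrict (Ioo (0:ℝ) R)) := u.aemeasurable_d
  have hd2le : ∀ r ∈ Ioo (0:ℝ) R, u.d r ^ 2 ≤ 1 := fun r hr => by
    nlinarith [huK r hr, abs_nonneg (u.d r), sq_abs (u.d r)]
  -- Step 1: uniform bound on the regularized integrals
  obtain ⟨M, hM⟩ : ∃ M : ℝ, ∀ t : ℝ, 0 ≤ t → t < 1 →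
      (∫ r in Ioo (0:ℝ) R, r ^ (N - 1) * u.d r ^ 2 / Real.sqrt (1 - t ^ 2 * u.d r ^ 2)) ≤ M := by
    have hstep : ∃ C₀ : ℝ, ∀ t : ℝ, 0 ≤ t → t < 1 →
        u.PsiR - (SpaceA.scale t u).PsiR ≤ (1 - t) * |C₀| := by
      rcases hu with ⟨hK, hcrit⟩ | ⟨hK, hcrit⟩
      · refine ⟨FDplus q lam b f u u.u, fun t ht0 ht1 => ?_⟩
        have hv := hcrit (SpaceA.scale t u) (SpaceA.scale_inK ht0 ht1.le hK)
        have hz : (fun r => (SpaceA.scale t u).u r - u.u r) = fun r => (t - 1) * u.u r := by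
          funext r; show t * u.u r - u.u r = (t - 1) * u.u r; ring
        rw [hz, FDplus_smul] at hv
        have habs : (t - 1) * FDplus q lam b f u u.u
            ≤ (1 - t) * |FDplus q lam b f u u.u| := by
          nlinarith [neg_abs_le (FDplus q lam b f u u.u), abs_nonneg (FDplus q lam b f u u.u)]
        linarith
      · refine ⟨FDminus q lam b f u u.u, fun t ht0 ht1 => ?_⟩
        have hv := hcrit (SpaceA.scale t u) (SpaceA.scale_inK ht0 ht1.le hK)
        have hz : (fun r => (SpaceA.scale t u).u r - u.u r) = fun r => (t - 1) * u.u r := by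
          funext r; show t * u.u r - u.u r = (t - 1) * u.u r; ring
        rw [hz, FDminus_smul] at hv
        have habs : (t - 1) * FDminus q lam b f u u.u
            ≤ (1 - t) * |FDminus q lam b f u u.u| := by
          nlinarith [neg_abs_le (FDminus q lam b f u u.u), abs_nonneg (FDminus q lam b f u u.u)]
        linarith
    obtain ⟨C₀, hC⟩ := hstep
    refine ⟨2 * |C₀|, fun t ht0 ht1 => ?_⟩
    have hpsi := psi_scale_lower u huK ht0 ht1
    have hle := hC t ht0 ht1
    have hI0 : 0 ≤ ∫ r in Ioo (0:ℝ) R,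
        r ^ (N - 1) * u.d r ^ 2 / Real.sqrt (1 - t ^ 2 * u.d r ^ 2) :=
      setIntegral_nonneg measurableSet_Ioo fun r hr =>
        div_nonneg (mul_nonneg (pow_nonneg hr.1.le _) (sq_nonneg _)) (Real.sqrt_nonneg _)
    set I := ∫ r in Ioo (0:ℝ) R,
        r ^ (N - 1) * u.d r ^ 2 / Real.sqrt (1 - t ^ 2 * u.d r ^ 2) with hI
    have h1t : (0:ℝ) < 1 - t := by linarith
    have h5 : (1 - t) * ((1 + t) / 2 * I) ≤ (1 - t) * |C₀| := by
      calc (1 - t) * ((1 + t) / 2 * I) = (1 - t ^ 2) / 2 * I := by ring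
        _ ≤ u.PsiR - (SpaceA.scale t u).PsiR := hpsi
        _ ≤ (1 - t) * |C₀| := hle
    have h4 : (1 + t) / 2 * I ≤ |C₀| := le_of_mul_le_mul_left h5 h1t
    nlinarith [mul_nonneg ht0 hI0]
  haveI : IsFiniteMeasure (volume.restrict (Ioo (0:ℝ) R)) :=
    ⟨by rw [Measure.restrict_apply_univ]; exact measure_Ioo_lt_top⟩
  -- Step 2: pass to the limit in ℝ≥0∞
  set G : ℝ → ENNReal := fun r =>
    ENNReal.ofReal (r ^ (N - 1) * u.d r ^ 2) / ENNReal.ofReal (Real.sqrt (1 - u.d r ^ 2))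
    with hGdef
  have hGmeas : AEMeasurable G (volume.restrict (Ioo (0:ℝ) R)) :=
    (ENNReal.measurable_ofReal.comp_aemeasurable
        ((measurable_id.pow_const _).aemeasurable.mul (hd.pow_const 2))).div
      (ENNReal.measurable_ofReal.comp_aemeasurable
        (Real.continuous_sqrt.measurable.comp_aemeasurable
          (aemeasurable_const.sub (hd.pow_const 2))))
  have hGbound : (∫⁻ r in Ioo (0:ℝ) R, G r) ≤ ENNReal.ofReal M := by
    set φ : ℕ → ℝ := fun n => 1 - 1 / (n + 1 : ℝ) with hφdef
    have hφ0 : ∀ n, 0 ≤ φ n := fun n => by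
      have hn : (0:ℝ) ≤ (n : ℝ) := Nat.cast_nonneg n
      have h1 : (1:ℝ) / (n + 1 : ℝ) ≤ 1 := by
        rw [div_le_one (by positivity)]; linarith
      simp only [hφdef]; linarith
    have hφ1 : ∀ n, φ n < 1 := fun n => by
      have h1 : (0:ℝ) < 1 / (n + 1 : ℝ) := by positivity
      simp only [hφdef]; linarith
    have hφlim : Tendsto φ atTop (nhds 1) := by
      have h := (tendsto_const_nhds :
          Tendsto (fun _ : ℕ => (1:ℝ)) atTop (nhds 1)).sub
        tendsto_one_div_add_atTop_nhds_zero_nat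
      simpa [hφdef] using h
    set g : ℕ → ℝ → ENNReal := fun n r =>
      ENNReal.ofReal (r ^ (N - 1) * u.d r ^ 2)
        / ENNReal.ofReal (Real.sqrt (1 - φ n ^ 2 * u.d r ^ 2)) with hgdef
    have hden_pos : ∀ n, ∀ r ∈ Ioo (0:ℝ) R, 0 < Real.sqrt (1 - φ n ^ 2 * u.d r ^ 2) :=
      fun n r hr => Real.sqrt_pos.2 (by
        nlinarith [hd2le r hr, hφ0 n, hφ1 n, sq_nonneg (u.d r),
          mul_nonneg (hφ0 n) (hφ0 n)])
    have hgmeas : ∀ n, AEMeasurable (g n) (volume.restrict (Ioo (0:ℝ) R)) := fun n =>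
      (ENNReal.measurable_ofReal.comp_aemeasurable
          ((measurable_id.pow_const _).aemeasurable.mul (hd.pow_const 2))).div
        (ENNReal.measurable_ofReal.comp_aemeasurable
          (Real.continuous_sqrt.measurable.comp_aemeasurable
            (aemeasurable_const.sub ((hd.pow_const 2).const_mul (φ n ^ 2)))))
    have hglint : ∀ n, (∫⁻ r in Ioo (0:ℝ) R, g n r) ≤ ENNReal.ofReal M := fun n => by
      have hint := integrableOn_f3 u huK (hφ0 n) (hφ1 n)
      have h0 : 0 ≤ᵐ[volume.restrict (Ioo (0:ℝ) R)]
          fun r => r ^ (N - 1) * u.d r ^ 2 / Real.sqrt (1 - φ n ^ 2 * u.d r ^ 2) := by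
        filter_upwards [ae_restrict_mem measurableSet_Ioo] with r hr
        exact div_nonneg (mul_nonneg (pow_nonneg hr.1.le _) (sq_nonneg _)) (Real.sqrt_nonneg _)
      calc (∫⁻ r in Ioo (0:ℝ) R, g n r)
          = ∫⁻ r in Ioo (0:ℝ) R, ENNReal.ofReal
              (r ^ (N - 1) * u.d r ^ 2 / Real.sqrt (1 - φ n ^ 2 * u.d r ^ 2)) := by
            apply lintegral_congr_ae
            filter_upwards [ae_restrict_mem measurableSet_Ioo] with r hr
            simp only [hgdef]
            rw [ENNReal.ofReal_div_of_pos (hden_pos n r hr)]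
        _ = ENNReal.ofReal (∫ r in Ioo (0:ℝ) R,
              r ^ (N - 1) * u.d r ^ 2 / Real.sqrt (1 - φ n ^ 2 * u.d r ^ 2)) :=
            (ofReal_integral_eq_lintegral_ofReal hint h0).symm
        _ ≤ ENNReal.ofReal M := ENNReal.ofReal_le_ofReal (hM _ (hφ0 n) (hφ1 n))
    have htend : ∀ r ∈ Ioo (0:ℝ) R, Tendsto (fun n => g n r) atTop (nhds (G r)) := by
      intro r hr
      rcases lt_or_eq_of_le (hd2le r hr) with hlt | heq
      · have hden : 0 < Real.sqrt (1 - u.d r ^ 2) := Real.sqrt_pos.2 (by linarith)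
        have h1 : Tendsto (fun n => 1 - φ n ^ 2 * u.d r ^ 2) atTop
            (nhds (1 - 1 ^ 2 * u.d r ^ 2)) :=
          tendsto_const_nhds.sub ((hφlim.pow 2).mul_const _)
        have h2 : Tendsto (fun n => Real.sqrt (1 - φ n ^ 2 * u.d r ^ 2)) atTop
            (nhds (Real.sqrt (1 - u.d r ^ 2))) := by
          have h := (Real.continuous_sqrt.tendsto _).comp h1
          simpa [Function.comp_def] using h
        have h3 : Tendsto
            (fun n => r ^ (N - 1) * u.d r ^ 2 / Real.sqrt (1 - φ n ^ 2 * u.d r ^ 2))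
            atTop (nhds (r ^ (N - 1) * u.d r ^ 2 / Real.sqrt (1 - u.d r ^ 2))) :=
          tendsto_const_nhds.div h2 hden.ne'
        have h5 : Tendsto (fun n => ENNReal.ofReal
            (r ^ (N - 1) * u.d r ^ 2 / Real.sqrt (1 - φ n ^ 2 * u.d r ^ 2))) atTop
            (nhds (ENNReal.ofReal (r ^ (N - 1) * u.d r ^ 2 / Real.sqrt (1 - u.d r ^ 2)))) := by
          have h4 := (ENNReal.continuous_ofReal.tendsto _).comp h3
          simpa [Function.comp_def] using h4
        have hGr : G r
            = ENNReal.ofReal (r ^ (N - 1) * u.d r ^ 2 / Real.sqrt (1 - u.d r ^ 2)) := by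
          simp only [hGdef]
          rw [ENNReal.ofReal_div_of_pos hden]
        rw [hGr]
        refine h5.congr fun n => ?_
        simp only [hgdef]
        rw [ENNReal.ofReal_div_of_pos (hden_pos n r hr)]
      · have hnum : ENNReal.ofReal (r ^ (N - 1) * u.d r ^ 2) ≠ 0 := by
          rw [heq, mul_one]
          exact (ENNReal.ofReal_pos.2 (pow_pos hr.1 _)).ne'
        have hsq0 : Real.sqrt (1 - u.d r ^ 2) = 0 := by rw [heq]; simp
        have hGr : G r = ⊤ := by
          simp only [hGdef]
          rw [hsq0, ENNReal.ofReal_zero, ENNReal.div_zero hnum]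
        rw [hGr]
        have h1 : Tendsto (fun n => 1 - φ n ^ 2 * u.d r ^ 2) atTop
            (nhds (1 - 1 ^ 2 * u.d r ^ 2)) :=
          tendsto_const_nhds.sub ((hφlim.pow 2).mul_const _)
        have h2 : Tendsto (fun n => ENNReal.ofReal (Real.sqrt (1 - φ n ^ 2 * u.d r ^ 2)))
            atTop (nhds 0) := by
          have h3 := (Real.continuous_sqrt.tendsto _).comp h1
          have h4 := (ENNReal.continuous_ofReal.tendsto _).comp h3
          simpa [Function.comp_def, heq] using h4
        have hinv : Tendsto (fun n =>
            (ENNReal.ofReal (Real.sqrt (1 - φ n ^ 2 * u.d r ^ 2)))⁻¹) atTop (nhds ⊤) := by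
          simpa using h2.inv
        have h5 := ENNReal.Tendsto.const_mul
          (a := ENNReal.ofReal (r ^ (N - 1) * u.d r ^ 2)) hinv (Or.inl (by simp))
        rw [ENNReal.mul_top hnum] at h5
        refine h5.congr fun n => ?_
        simp only [hgdef]
        rw [div_eq_mul_inv]
    calc (∫⁻ r in Ioo (0:ℝ) R, G r)
        = ∫⁻ r in Ioo (0:ℝ) R, liminf (fun n => g n r) atTop := by
          apply lintegral_congr_ae
          filter_upwards [ae_restrict_mem measurableSet_Ioo] with r hr
          exact ((htend r hr).liminf_eq).symm
      _ ≤ liminf (fun n => ∫⁻ r in Ioo (0:ℝ) R, g n r) atTop := lintegral_liminf_le' hgmeas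
      _ ≤ liminf (fun _ : ℕ => ENNReal.ofReal M) atTop :=
          liminf_le_liminf (Filter.Eventually.of_forall hglint)
      _ = ENNReal.ofReal M := liminf_const _
  -- Conclusion 1
  have hf1 : IntegrableOn
      (fun r : ℝ => r ^ (N - 1) * u.d r ^ 2 / Real.sqrt (1 - u.d r ^ 2)) (Ioo 0 R) := by
    have hmeas : AEMeasurable
        (fun r : ℝ => r ^ (N - 1) * u.d r ^ 2 / Real.sqrt (1 - u.d r ^ 2))
        (volume.restrict (Ioo (0:ℝ) R)) :=
      ((measurable_id.pow_const _).aemeasurable.mul (hd.pow_const 2)).div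
        (Real.continuous_sqrt.measurable.comp_aemeasurable
          (aemeasurable_const.sub (hd.pow_const 2)))
    have hnn : 0 ≤ᵐ[volume.restrict (Ioo (0:ℝ) R)]
        fun r : ℝ => r ^ (N - 1) * u.d r ^ 2 / Real.sqrt (1 - u.d r ^ 2) := by
      filter_upwards [ae_restrict_mem measurableSet_Ioo] with r hr
      exact div_nonneg (mul_nonneg (pow_nonneg hr.1.le _) (sq_nonneg _)) (Real.sqrt_nonneg _)
    refine ⟨hmeas.aestronglyMeasurable, (hasFiniteIntegral_iff_ofReal hnn).2 ?_⟩
    refine lt_of_le_of_lt (le_trans ?_ hGbound) ENNReal.ofReal_lt_top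
    apply lintegral_mono_ae
    filter_upwards [ae_restrict_mem measurableSet_Ioo] with r hr
    rcases eq_or_lt_of_le (Real.sqrt_nonneg (1 - u.d r ^ 2)) with h0 | hpos
    · rw [← h0, div_zero, ENNReal.ofReal_zero]
      exact zero_le
    · exact le_of_eq (ENNReal.ofReal_div_of_pos hpos)
  -- Conclusion 2
  have hf2 : IntegrableOn
      (fun r : ℝ => r ^ (N - 1) * |u.d r| / Real.sqrt (1 - u.d r ^ 2)) (Ioo 0 R) := by
    have hmeas : AEMeasurable
        (fun r : ℝ => r ^ (N - 1) * |u.d r| / Real.sqrt (1 - u.d r ^ 2))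
        (volume.restrict (Ioo (0:ℝ) R)) :=
      ((measurable_id.pow_const _).aemeasurable.mul
          (continuous_abs.measurable.comp_aemeasurable hd)).div
        (Real.continuous_sqrt.measurable.comp_aemeasurable
          (aemeasurable_const.sub (hd.pow_const 2)))
    have hg : Integrable (fun r : ℝ =>
        2 * (r ^ (N - 1) * u.d r ^ 2 / Real.sqrt (1 - u.d r ^ 2)) + 2 * (max 1 R) ^ (N - 1))
        (volume.restrict (Ioo (0:ℝ) R)) :=
      (hf1.const_mul 2).add (integrable_const _)
    refine hg.mono' hmeas.aestronglyMeasurable ?_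
    filter_upwards [ae_restrict_mem measurableSet_Ioo] with r hr
    have hr0 : (0:ℝ) < r := hr.1
    have hp : (0:ℝ) ≤ r ^ (N - 1) := pow_nonneg hr0.le _
    have hpC : r ^ (N - 1) ≤ (max 1 R) ^ (N - 1) :=
      pow_le_pow_left₀ hr0.le (hr.2.le.trans (le_max_right 1 R)) _
    have hC0 : (0:ℝ) ≤ (max 1 R) ^ (N - 1) := hp.trans hpC
    rw [Real.norm_eq_abs, abs_of_nonneg
      (div_nonneg (mul_nonneg hp (abs_nonneg _)) (Real.sqrt_nonneg _))]
    rcases eq_or_lt_of_le (Real.sqrt_nonneg (1 - u.d r ^ 2)) with h0 | hpos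
    · rw [← h0]
      simp only [div_zero]
      linarith
    · have hub := abs_le_aux (huK r hr)
      rw [div_le_iff₀ hpos]
      have hexp : (2 * (r ^ (N - 1) * u.d r ^ 2 / Real.sqrt (1 - u.d r ^ 2))
            + 2 * (max 1 R) ^ (N - 1)) * Real.sqrt (1 - u.d r ^ 2)
          = 2 * (r ^ (N - 1) * u.d r ^ 2)
            + 2 * (max 1 R) ^ (N - 1) * Real.sqrt (1 - u.d r ^ 2) := by
        field_simp
      rw [hexp]
      have h1 : r ^ (N - 1) * |u.d r|
          ≤ r ^ (N - 1) * (2 * u.d r ^ 2 + 2 * Real.sqrt (1 - u.d r ^ 2)) :=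
        mul_le_mul_of_nonneg_left hub hp
      have h2 : r ^ (N - 1) * Real.sqrt (1 - u.d r ^ 2)
          ≤ (max 1 R) ^ (N - 1) * Real.sqrt (1 - u.d r ^ 2) :=
        mul_le_mul_of_nonneg_right hpC (Real.sqrt_nonneg _)
      nlinarith
  -- Conclusion 3
  have hnull : volume {r : ℝ | r ∈ Ioo (0:ℝ) R ∧ |u.d r| = 1} = 0 := by
    have hae : ∀ᵐ r ∂(volume.restrict (Ioo (0:ℝ) R)), G r < ⊤ :=
      ae_lt_top' hGmeas (lt_of_le_of_lt hGbound ENNReal.ofReal_lt_top).ne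
    have hset : volume.restrict (Ioo (0:ℝ) R) {r | ¬ G r < ⊤} = 0 := ae_iff.mp hae
    have hsub : {r : ℝ | r ∈ Ioo (0:ℝ) R ∧ |u.d r| = 1} ⊆ {r | ¬ G r < ⊤} := by
      rintro r ⟨hr, habs⟩
      have hd2 : u.d r ^ 2 = 1 := by rw [← sq_abs, habs]; norm_num
      have hnum : ENNReal.ofReal (r ^ (N - 1) * u.d r ^ 2) ≠ 0 := by
        rw [hd2, mul_one]
        exact (ENNReal.ofReal_pos.2 (pow_pos hr.1 _)).ne'
      have hsq0 : Real.sqrt (1 - u.d r ^ 2) = 0 := by rw [hd2]; simp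
      have hGr : G r = ⊤ := by
        simp only [hGdef]
        rw [hsq0, ENNReal.ofReal_zero, ENNReal.div_zero hnum]
      simp [hGr]
    have hmu : volume.restrict (Ioo (0:ℝ) R) {r : ℝ | r ∈ Ioo (0:ℝ) R ∧ |u.d r| = 1} = 0 :=
      measure_mono_null hsub hset
    rwa [Measure.restrict_apply' measurableSet_Ioo,
      inter_eq_left.2 (fun r hr => hr.1)] at hmu
  exact ⟨hf1, hf2, hnull⟩
end
end
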